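/- arXiv:2108.11090 — 3 statements merged into one kernel-verified Lean document; each statement's English description precedes it below -/
import Mathlib

section
/- For every nonzero real number λ and every n ≥ 0, the degenerate Bernoulli polynomials satisfy β_{n,λ}(x) = Σ_{k=0}^{n} { Σ_{l=0}^{n} C(n,l) β_{n−l,λ} S_{1,λ}(l,k) } φ_{k,λ}(x) as polynomials in x, where C(n,l) is the binomial coefficient. -/
open Nat PowerSeries Finset

noncomputable section

/-- λ-falling factorial (x)_{n,λ} = x(x−λ)···(x−(n−1)λ). -/
def dfall (l x : ℝ) (n : ℕ) : ℝ := ∏ i ∈ range n, (x - i * l)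

/-- degenerate exponential e_λ^x(t) = Σ (x)_{n,λ} t^n/n! as a formal power series. -/
def degExp (l x : ℝ) : PowerSeries ℝ := PowerSeries.mk fun n => dfall l x n / n !

/-- degenerate logarithm log_λ(1+t) = Σ_{n≥1} (∏_{j=1}^{n−1}(λ−j)) t^n/n!. -/
def degLog (l : ℝ) : PowerSeries ℝ :=
  PowerSeries.mk fun n => if n = 0 then 0 else (∏ j ∈ range (n - 1), (l - (j + 1))) / n !

/-- composition Σ_k a_k f^k, valid when f has zero constant term. -/
def psComp (a : ℕ → ℝ) (f : PowerSeries ℝ) : PowerSeries ℝ :=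
  PowerSeries.mk fun n => ∑ k ∈ range (n + 1), a k * PowerSeries.coeff (R := ℝ) n (f ^ k)

/-- e_λ^x(f), the degenerate exponential composed with f (f with zero constant term). -/
def degExpComp (l x : ℝ) (f : PowerSeries ℝ) : PowerSeries ℝ :=
  psComp (fun k => dfall l x k / k !) f

/-- degenerate Stirling numbers of the second kind. -/
def dS2 (l : ℝ) (n k : ℕ) : ℝ :=
  (n ! : ℝ) / k ! * PowerSeries.coeff (R := ℝ) n ((degExp l 1 - 1) ^ k)

/-- degenerate Stirling numbers of the first kind. -/
def dS1 (l : ℝ) (n k : ℕ) : ℝ :=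
  (n ! : ℝ) / k ! * PowerSeries.coeff (R := ℝ) n (degLog l ^ k)

/-- (signed) Stirling numbers of the first kind: coefficients of x(x-1)···(x-n+1). -/
def sS1 (n k : ℕ) : ℝ := (descPochhammer ℝ n).coeff k

/-- fully degenerate Bell polynomial φ_{n,λ}(x). -/
def dBell (l : ℝ) (n : ℕ) (x : ℝ) : ℝ := ∑ k ∈ range (n + 1), dS2 l n k * dfall l x k

/-- degenerate Whitney numbers of the second kind. -/
def dW (m : ℕ) (l : ℝ) (n k : ℕ) : ℝ :=
  (n ! : ℝ) / k ! *
    PowerSeries.coeff (R := ℝ) n (degExp l 1 * ((degExp l (m : ℝ) - 1) * PowerSeries.C (R := ℝ) (1 / m)) ^ k)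

/-- fully degenerate Dowling polynomial d_{m,λ}(n,x). -/
def dDowling (m : ℕ) (l : ℝ) (n : ℕ) (x : ℝ) : ℝ :=
  ∑ k ∈ range (n + 1), dW m l n k * dfall l x k

/-- division of a power series by t (coefficient shift). -/
def divT (f : PowerSeries ℝ) : PowerSeries ℝ :=
  PowerSeries.mk fun n => PowerSeries.coeff (R := ℝ) (n + 1) f

/-- degenerate Bernoulli polynomials β_{n,λ}(x): (t/(e_λ(t)−1)) e_λ^x(t) = Σ β_{n,λ}(x) tⁿ/n!. -/
def dBernoulliPoly (l : ℝ) (n : ℕ) (x : ℝ) : ℝ :=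
  (n ! : ℝ) * PowerSeries.coeff (R := ℝ) n ((divT (degExp l 1 - 1))⁻¹ * degExp l x)

/-- the λ-falling factorial polynomial (x)_{k,λ}. -/
def dfallPoly (l : ℝ) (k : ℕ) : Polynomial ℝ :=
  ∏ i ∈ range k, (Polynomial.X - Polynomial.C (i * l))

/-- degenerate poly-Bell polynomials B^{(r)}_{n,λ}(x). -/
def dPolyBell (r : ℤ) (l : ℝ) (n : ℕ) (x : ℝ) : ℝ :=
  (n ! : ℝ) * PowerSeries.coeff (R := ℝ) n
    (divT (psComp (fun k => if k = 0 then 0 else dfall l 1 k / ((k - 1)! * (k : ℝ) ^ r))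
        (degLog l)) *
      (divT (degExp l 1 - 1))⁻¹ * degExp l x)

/-- degenerate Bernoulli polynomials of the second kind b_{n,λ}(x). -/
def dBern2 (l : ℝ) (n : ℕ) (x : ℝ) : ℝ :=
  (n ! : ℝ) *
    PowerSeries.coeff (R := ℝ) n ((divT (degLog l))⁻¹ * PowerSeries.mk fun j => dfall 1 x j / j !)


lemma coeff_degExp (l x : ℝ) (n : ℕ) : coeff (R := ℝ) n (degExp l x) = dfall l x n / n ! := by
  simp [degExp]

lemma dfall_succ (l x : ℝ) (n : ℕ) : dfall l x (n+1) = dfall l x n * (x - n * l) := by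
  simp [dfall, prod_range_succ]

lemma dfall_zero (l x : ℝ) : dfall l x 0 = 1 := by simp [dfall]

lemma degExp_zero (l : ℝ) : degExp l 0 = 1 := by
  ext n
  cases n with
  | zero => simp [coeff_degExp, dfall]
  | succ m =>
    rw [coeff_degExp]
    have h : dfall l 0 (m+1) = 0 := by
      apply Finset.prod_eq_zero (Finset.mem_range.2 (Nat.succ_pos m)); simp
    simp [h, coeff_one]

lemma constCoeff_F (l : ℝ) : constantCoeff (R := ℝ) (degExp l 1 - 1) = 0 := by
  rw [map_sub, degExp, constantCoeff_mk, constantCoeff_one]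
  simp [dfall]

lemma constCoeff_G (l : ℝ) : constantCoeff (R := ℝ) (degLog l) = 0 := by
  simp [← coeff_zero_eq_constantCoeff_apply, degLog]

lemma tri_zero {f : PowerSeries ℝ} (hf : constantCoeff (R := ℝ) f = 0) {j k : ℕ} (h : j < k) :
    coeff (R := ℝ) j (f ^ k) = 0 := by
  have : (X : PowerSeries ℝ)^k ∣ f^k := pow_dvd_pow_of_dvd (X_dvd_iff.2 hf) k
  exact (X_pow_dvd_iff.1 this) j h

lemma ode_E (l : ℝ) : (1 + C (R := ℝ) l * X) * d⁄dX ℝ (degExp l 1) = degExp l 1 := by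
  ext n
  rw [add_mul, one_mul, map_add, mul_assoc]
  cases n with
  | zero =>
    simp [coeff_derivative, coeff_degExp, dfall_succ, dfall_zero]
  | succ m =>
    rw [coeff_C_mul, coeff_succ_X_mul, coeff_derivative, coeff_derivative, coeff_degExp,
      coeff_degExp, dfall_succ l 1 (m+1)]
    have h1 : ((m+1)! : ℝ) ≠ 0 := by positivity
    have h3 : ((m+1+1)! : ℝ) = ((m:ℝ)+2) * (m+1)! := by
      rw [Nat.factorial_succ]; push_cast; ring
    rw [h3]
    field_simp
    push_cast
    ring

lemma coeff_degLog_succ (l : ℝ) (n : ℕ) :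
    coeff (R := ℝ) (n+1) (degLog l) = (∏ j ∈ range n, (l - (j + 1))) / (n+1)! := by
  simp [degLog]

lemma ode_G (l : ℝ) : (1 + X) * d⁄dX ℝ (degLog l) = 1 + C (R := ℝ) l * degLog l := by
  ext n
  rw [add_mul, one_mul, map_add, map_add, coeff_C_mul]
  cases n with
  | zero =>
    simp [coeff_derivative, coeff_degLog_succ, degLog]
  | succ m =>
    rw [coeff_succ_X_mul, coeff_derivative, coeff_derivative, coeff_degLog_succ,
      coeff_degLog_succ, prod_range_succ, coeff_one]
    have h1 : ((m+1)! : ℝ) ≠ 0 := by positivity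
    have h3 : ((m+1+1)! : ℝ) = ((m:ℝ)+2) * (m+1)! := by
      rw [Nat.factorial_succ]; push_cast; ring
    rw [h3]
    simp only [Nat.succ_ne_zero, if_false]
    field_simp
    push_cast
    ring

lemma coeff_mul_der (c : ℝ) (g : PowerSeries ℝ) (n : ℕ) :
    coeff (R := ℝ) n ((1 + C (R := ℝ) c * X) * d⁄dX ℝ g)
      = ((n:ℝ)+1) * coeff (R := ℝ) (n+1) g + c * n * coeff (R := ℝ) n g := by
  rw [add_mul, one_mul, map_add, mul_assoc, coeff_C_mul]
  cases n with
  | zero => simp [coeff_derivative]; try ring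
  | succ m =>
    rw [coeff_succ_X_mul, coeff_derivative, coeff_derivative]
    push_cast
    ring

lemma pow_ode_F (l : ℝ) (k : ℕ) :
    (1 + C (R := ℝ) l * X) * d⁄dX ℝ ((degExp l 1 - 1)^(k+1)) =
      (k+1) • ((degExp l 1 - 1)^k + (degExp l 1 - 1)^(k+1)) := by
  rw [Derivation.leibniz_pow]
  have hd : d⁄dX ℝ (degExp l 1 - 1) = d⁄dX ℝ (degExp l 1) := by
    rw [map_sub]; simp
  rw [Nat.add_sub_cancel, smul_eq_mul, hd, mul_smul_comm]
  congr 1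
  rw [show (1 + C (R := ℝ) l * X) * ((degExp l 1 - 1) ^ k * d⁄dX ℝ (degExp l 1))
      = (degExp l 1 - 1) ^ k * ((1 + C (R := ℝ) l * X) * d⁄dX ℝ (degExp l 1)) by ring,
    ode_E]
  rw [show degExp l 1 = 1 + (degExp l 1 - 1) by ring]
  ring

lemma pow_ode_G (l : ℝ) (k : ℕ) :
    (1 + C (R := ℝ) 1 * X) * d⁄dX ℝ ((degLog l)^(k+1)) =
      (k+1) • ((degLog l)^k + C (R := ℝ) l * (degLog l)^(k+1)) := by
  rw [Derivation.leibniz_pow, Nat.add_sub_cancel, smul_eq_mul, mul_smul_comm]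
  congr 1
  rw [show (1 + C (R := ℝ) 1 * X) * ((degLog l) ^ k * d⁄dX ℝ (degLog l))
      = (degLog l) ^ k * ((1 + X) * d⁄dX ℝ (degLog l)) by rw [map_one]; ring,
    ode_G]
  ring

lemma rec_a (l : ℝ) (n m : ℕ) :
    ((n:ℝ)+1) * coeff (R := ℝ) (n+1) ((degExp l 1 - 1)^m)
      = (m:ℝ) * coeff (R := ℝ) n ((degExp l 1 - 1)^(m-1))
        + ((m:ℝ) - l*n) * coeff (R := ℝ) n ((degExp l 1 - 1)^m) := by
  cases m with
  | zero =>
    cases n <;> simp [coeff_one]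
  | succ k =>
    have h := congrArg (coeff (R := ℝ) n) (pow_ode_F l k)
    rw [coeff_mul_der] at h
    rw [map_nsmul, map_add] at h
    simp only [nsmul_eq_mul] at h
    push_cast at h ⊢
    linear_combination h

lemma rec_b (l : ℝ) (n m : ℕ) :
    ((n:ℝ)+1) * coeff (R := ℝ) (n+1) ((degLog l)^m)
      = (m:ℝ) * coeff (R := ℝ) n ((degLog l)^(m-1))
        + (l*(m:ℝ) - n) * coeff (R := ℝ) n ((degLog l)^m) := by
  cases m with
  | zero =>
    cases n <;> simp [coeff_one]
  | succ k =>
    have h := congrArg (coeff (R := ℝ) n) (pow_ode_G l k)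
    rw [coeff_mul_der] at h
    rw [map_nsmul, map_add, coeff_C_mul] at h
    simp only [nsmul_eq_mul] at h
    push_cast at h ⊢
    linear_combination h

lemma inv_rel (l : ℝ) (j : ℕ) : ∀ m : ℕ,
    (∑ k ∈ range (j+1), coeff (R := ℝ) j ((degLog l)^k) * coeff (R := ℝ) k ((degExp l 1 - 1)^m))
      = if j = m then 1 else 0 := by
  induction j with
  | zero =>
    intro m
    rw [sum_range_one]
    cases m with
    | zero => simp
    | succ i => simp [tri_zero (constCoeff_F l) (Nat.succ_pos i)]
  | succ j ih =>
    intro m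
    have hj1 : ((j:ℝ)+1) ≠ 0 := by positivity
    have key : ((j:ℝ)+1) * (∑ k ∈ range (j+2),
          coeff (R := ℝ) (j+1) ((degLog l)^k) * coeff (R := ℝ) k ((degExp l 1 - 1)^m))
        = (m:ℝ) * (∑ k ∈ range (j+1),
            coeff (R := ℝ) j ((degLog l)^k) * coeff (R := ℝ) k ((degExp l 1 - 1)^(m-1)))
          + ((m:ℝ) - j) * (∑ k ∈ range (j+1),
            coeff (R := ℝ) j ((degLog l)^k) * coeff (R := ℝ) k ((degExp l 1 - 1)^m)) := by
      rw [Finset.mul_sum]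
      have step1 : ∀ k ∈ range (j+2),
          ((j:ℝ)+1) * (coeff (R := ℝ) (j+1) ((degLog l)^k) * coeff (R := ℝ) k ((degExp l 1 - 1)^m))
            = (k:ℝ) * coeff (R := ℝ) j ((degLog l)^(k-1)) * coeff (R := ℝ) k ((degExp l 1 - 1)^m)
              + (l*(k:ℝ) - j) * coeff (R := ℝ) j ((degLog l)^k) * coeff (R := ℝ) k ((degExp l 1 - 1)^m) := by
        intro k _
        linear_combination (coeff (R := ℝ) k ((degExp l 1 - 1)^m)) * rec_b l j k
      rw [Finset.sum_congr rfl step1, Finset.sum_add_distrib]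
      rw [Finset.sum_range_succ' (fun k => (k:ℝ) * coeff (R := ℝ) j ((degLog l)^(k-1)) * coeff (R := ℝ) k ((degExp l 1 - 1)^m)) (j+1)]
      rw [Finset.sum_range_succ (fun k => (l*(k:ℝ) - j) * coeff (R := ℝ) j ((degLog l)^k) * coeff (R := ℝ) k ((degExp l 1 - 1)^m)) (j+1)]
      rw [tri_zero (constCoeff_G l) (Nat.lt_succ_self j)]
      simp only [Nat.cast_zero, zero_mul, add_zero, mul_zero, Nat.add_sub_cancel]
      rw [Finset.mul_sum, Finset.mul_sum, ← Finset.sum_add_distrib, ← Finset.sum_add_distrib]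
      apply Finset.sum_congr rfl
      intro i _
      push_cast
      linear_combination (coeff (R := ℝ) j ((degLog l)^i)) * rec_a l i m
    rw [ih m, ih (m-1)] at key
    rcases eq_or_ne (j+1) m with h | h
    · subst h
      simp only [Nat.add_sub_cancel, if_pos rfl, if_true, eq_self_iff_true,
        if_neg (by omega : ¬ j = j + 1)] at key
      rw [if_pos rfl]
      apply mul_left_cancel₀ hj1
      rw [key]; push_cast; ring
    · have hz : (m:ℝ) * (if j = m-1 then (1:ℝ) else 0)
          + ((m:ℝ) - j) * (if j = m then (1:ℝ) else 0) = 0 := by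
        by_cases hj2 : j = m - 1
        · have hm0 : m = 0 := by omega
          subst hm0
          have hj0 : j = 0 := by omega
          simp [hj0]
        · by_cases hj : j = m
          · subst hj; simp [hj2]
          · simp [hj2, hj]
      rw [hz] at key
      rw [if_neg h]
      apply mul_left_cancel₀ hj1
      rw [key, mul_zero]

lemma bell_sum (l x : ℝ) {n j : ℕ} (hj : j ≤ n) :
    ∑ k ∈ range (n+1), dS1 l j k * dBell l k x = dfall l x j := by
  have h1 : ∀ k ∈ range (n+1), dS1 l j k * dBell l k x
      = ∑ m ∈ range (n+1),
          (j ! : ℝ)/m ! * (coeff (R := ℝ) j ((degLog l)^k) * coeff (R := ℝ) k ((degExp l 1 - 1)^m))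
            * dfall l x m := by
    intro k hk
    rw [dBell, Finset.mul_sum]
    rw [Finset.sum_subset (Finset.range_subset_range.2 (by
        simp only [Finset.mem_range] at hk; omega : k+1 ≤ n+1))]
    · apply Finset.sum_congr rfl
      intro m _
      rw [dS1, dS2]
      have hk0 : (k ! : ℝ) ≠ 0 := by positivity
      field_simp
    · intro m _ hm
      have hkm : k < m := by simp only [Finset.mem_range, not_lt] at hm; omega
      rw [dS2, tri_zero (constCoeff_F l) hkm]
      simp
  rw [Finset.sum_congr rfl h1, Finset.sum_comm]
  have h2 : ∀ m ∈ range (n+1),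
      (∑ k ∈ range (n+1),
        (j ! : ℝ)/m ! * (coeff (R := ℝ) j ((degLog l)^k) * coeff (R := ℝ) k ((degExp l 1 - 1)^m))
          * dfall l x m)
      = (j ! : ℝ)/m ! * (if j = m then 1 else 0) * dfall l x m := by
    intro m _
    have : ∑ k ∈ range (n+1), coeff (R := ℝ) j ((degLog l)^k) * coeff (R := ℝ) k ((degExp l 1 - 1)^m)
        = if j = m then 1 else 0 := by
      rw [← Finset.sum_subset (Finset.range_subset_range.2 (by omega : j+1 ≤ n+1))]
      · exact inv_rel l j m
      · intro k _ hk
        rw [tri_zero (constCoeff_G l) (by simp only [Finset.mem_range, not_lt] at hk; omega)]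
        ring
    rw [← this, ← Finset.sum_mul, ← Finset.mul_sum]
  rw [Finset.sum_congr rfl h2]
  rw [Finset.sum_eq_single_of_mem j (Finset.mem_range.2 (by omega))]
  · rw [if_pos rfl]
    have : (j ! : ℝ) ≠ 0 := by positivity
    field_simp
  · intro m _ hm
    rw [if_neg (fun h => hm h.symm)]
    ring

lemma bern_expand (l x : ℝ) (n : ℕ) :
    dBernoulliPoly l n x
      = ∑ j ∈ range (n+1), (n.choose j : ℝ) * dBernoulliPoly l (n-j) 0 * dfall l x j := by
  rw [dBernoulliPoly, mul_comm ((divT (degExp l 1 - 1))⁻¹) (degExp l x), coeff_mul,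
    Finset.Nat.sum_antidiagonal_eq_sum_range_succ_mk, Finset.mul_sum]
  apply Finset.sum_congr rfl
  intro j hj
  simp only [Finset.mem_range] at hj
  have hjn : j ≤ n := by omega
  rw [dBernoulliPoly, degExp_zero, mul_one, coeff_degExp]
  have hfact : (n ! : ℝ) = (n.choose j : ℝ) * j ! * (n-j)! := by
    rw [← Nat.choose_mul_factorial_mul_factorial hjn]; push_cast; ring
  have hj0 : (j ! : ℝ) ≠ 0 := by positivity
  rw [hfact]
  field_simp


theorem stmt5 (l : ℝ) (hl : l ≠ 0) (n : ℕ) (x : ℝ) :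
    dBernoulliPoly l n x =
      ∑ k ∈ range (n + 1),
        (∑ j ∈ range (n + 1), n.choose j * dBernoulliPoly l (n - j) 0 * dS1 l j k) *
          dBell l k x := by
  have h1 : ∀ k ∈ range (n+1),
      (∑ j ∈ range (n + 1), (n.choose j : ℝ) * dBernoulliPoly l (n - j) 0 * dS1 l j k) *
          dBell l k x
        = ∑ j ∈ range (n + 1),
            (n.choose j : ℝ) * dBernoulliPoly l (n - j) 0 * (dS1 l j k * dBell l k x) := by
    intro k _
    rw [Finset.sum_mul]
    exact Finset.sum_congr rfl fun j _ => by ring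
  rw [Finset.sum_congr rfl h1, Finset.sum_comm]
  have h2 : ∀ j ∈ range (n+1),
      (∑ k ∈ range (n + 1),
        (n.choose j : ℝ) * dBernoulliPoly l (n - j) 0 * (dS1 l j k * dBell l k x))
      = (n.choose j : ℝ) * dBernoulliPoly l (n - j) 0 * dfall l x j := by
    intro j hj
    rw [← Finset.mul_sum, bell_sum l x (by simp only [Finset.mem_range] at hj; omega)]
  rw [Finset.sum_congr rfl h2, ← bern_expand]


end
end

section
/- For every nonzero real number λ and every n ≥ 0, the fully degenerate Bell polynomials are expressed in terms of the degenerate Bernoulli polynomials of the second kind as φ_{n,λ}(x) = Σ_{l=0}^{n} β_{l,λ} S_{2,λ}(n,l) + Σ_{k=1}^{n} { (1/k!) Σ_{j=0}^{n−1} Σ_{l=0}^{k−1} C(n,j) C(k−1,l) (1)_{n−j,λ} (−1)^{k−1−l} φ_{j,λ}(l) } b_{k,λ}(x), as polynomials in x, where C(·,·) denotes binomial coefficients. -/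
open Nat PowerSeries Finset

noncomputable section

namespace Stmt8

local notation "cf" => PowerSeries.coeff (R := ℝ)

lemma coeff_pow_eq_zero {f : PowerSeries ℝ} (hf : constantCoeff (R := ℝ) f = 0) :
    ∀ {k n : ℕ}, n < k → cf n (f ^ k) = 0 := by
  intro k
  induction k with
  | zero => intro n h; omega
  | succ k ih =>
    intro n h
    rw [pow_succ, mul_comm, PowerSeries.coeff_mul]
    apply Finset.sum_eq_zero
    intro p hp
    rw [Finset.HasAntidiagonal.mem_antidiagonal] at hp
    rcases Nat.eq_zero_or_pos p.1 with h1 | h1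
    · rw [h1, PowerSeries.coeff_zero_eq_constantCoeff, hf, zero_mul]
    · rw [ih (by omega), mul_zero]

def pcomp (g f : PowerSeries ℝ) : PowerSeries ℝ :=
  psComp (fun k => PowerSeries.coeff (R := ℝ) k g) f

lemma coeff_pcomp (g f : PowerSeries ℝ) (n : ℕ) :
    cf n (pcomp g f) = ∑ k ∈ range (n + 1), cf k g * cf n (f ^ k) := by
  simp [pcomp, psComp]

lemma coeff_mul_pcomp (M g f : PowerSeries ℝ) (hf : constantCoeff (R := ℝ) f = 0) (n : ℕ) :
    cf n (M * pcomp g f) = ∑ k ∈ range (n + 1), cf k g * cf n (M * f ^ k) := by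
  rw [PowerSeries.coeff_mul]
  have h1 : ∀ p ∈ antidiagonal n, cf p.1 M * cf p.2 (pcomp g f)
      = ∑ k ∈ range (n + 1), cf k g * (cf p.1 M * cf p.2 (f ^ k)) := by
    intro p hp
    rw [Finset.HasAntidiagonal.mem_antidiagonal] at hp
    rw [coeff_pcomp, Finset.mul_sum]
    rw [← Finset.sum_subset (Finset.range_subset_range.2 (by omega : p.2 + 1 ≤ n + 1))]
    · exact Finset.sum_congr rfl fun k _ => by ring
    · intro k _ hk
      rw [Finset.mem_range, not_lt] at hk
      rw [coeff_pow_eq_zero hf (by omega), mul_zero, mul_zero]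
  rw [Finset.sum_congr rfl h1, Finset.sum_comm]
  exact Finset.sum_congr rfl fun k _ => by rw [PowerSeries.coeff_mul, Finset.mul_sum]

lemma coeff_pcomp' (g f : PowerSeries ℝ) (hf : constantCoeff (R := ℝ) f = 0) (n : ℕ) :
    cf n (pcomp g f) = ∑ k ∈ range (n + 1), cf k g * cf n (f ^ k) := coeff_pcomp g f n

lemma constantCoeff_pcomp (g f : PowerSeries ℝ) (hf : constantCoeff (R := ℝ) f = 0) :
    constantCoeff (R := ℝ) (pcomp g f) = constantCoeff (R := ℝ) g := by
  rw [← PowerSeries.coeff_zero_eq_constantCoeff, coeff_pcomp]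
  simp

lemma pcomp_C (c : ℝ) (f : PowerSeries ℝ) : pcomp (PowerSeries.C (R := ℝ) c) f = PowerSeries.C (R := ℝ) c := by
  ext n
  rw [coeff_pcomp]
  rcases Nat.eq_zero_or_pos n with rfl | hn
  · simp
  · rw [Finset.sum_eq_zero, PowerSeries.coeff_C, if_neg (by omega)]
    intro k hk
    rcases Nat.eq_zero_or_pos k with rfl | hk1
    · simp [PowerSeries.coeff_C]; intro h; omega
    · rw [PowerSeries.coeff_C, if_neg (by omega), zero_mul]

lemma pcomp_one (f : PowerSeries ℝ) : pcomp 1 f = 1 := by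
  have := pcomp_C 1 f; simpa using this

lemma pcomp_X {f : PowerSeries ℝ} (hf : constantCoeff (R := ℝ) f = 0) : pcomp X f = f := by
  ext n
  rw [coeff_pcomp]
  rcases Nat.eq_zero_or_pos n with rfl | hn
  · simpa using hf.symm
  · rw [Finset.sum_eq_single 1]
    · simp
    · intro k hk hk1
      rw [PowerSeries.coeff_X, if_neg hk1, zero_mul]
    · intro h; rw [Finset.mem_range] at h; omega

lemma pcomp_add (g h f : PowerSeries ℝ) : pcomp (g + h) f = pcomp g f + pcomp h f := by
  ext n
  simp [coeff_pcomp, Finset.sum_add_distrib, add_mul]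

lemma pcomp_sub (g h f : PowerSeries ℝ) : pcomp (g - h) f = pcomp g f - pcomp h f := by
  ext n
  simp [coeff_pcomp, Finset.sum_sub_distrib, sub_mul]

lemma pcomp_smul (c : ℝ) (g f : PowerSeries ℝ) : pcomp (PowerSeries.C (R := ℝ) c * g) f = PowerSeries.C (R := ℝ) c * pcomp g f := by
  ext n
  simp [coeff_pcomp, PowerSeries.coeff_C_mul, Finset.mul_sum, mul_assoc]

open Polynomial in
lemma pcomp_coe {f : PowerSeries ℝ} (hf : constantCoeff (R := ℝ) f = 0) (p : Polynomial ℝ) :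
    pcomp (↑p) f = Polynomial.aeval f p := by
  induction p using Polynomial.induction_on' with
  | add p q hp hq => rw [Polynomial.coe_add, pcomp_add, hp, hq, map_add]
  | monomial k c =>
    rw [Polynomial.coe_monomial, Polynomial.aeval_monomial]
    ext n
    rw [coeff_pcomp]
    have : (algebraMap ℝ (PowerSeries ℝ)) c = PowerSeries.C (R := ℝ) c := rfl
    rw [this, PowerSeries.coeff_C_mul]
    rcases le_or_gt k n with hk | hk
    · rw [Finset.sum_eq_single k]
      · rw [PowerSeries.coeff_monomial, if_pos rfl]
      · intro m _ hm
        rw [PowerSeries.coeff_monomial, if_neg hm, zero_mul]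
      · intro h; rw [Finset.mem_range] at h; omega
    · rw [Finset.sum_eq_zero, coeff_pow_eq_zero hf hk, mul_zero]
      intro m hm
      rw [Finset.mem_range] at hm
      rw [PowerSeries.coeff_monomial, if_neg (by omega), zero_mul]

lemma coeff_pcomp_congr {g₁ g₂ f : PowerSeries ℝ} {n : ℕ}
    (h : ∀ k ≤ n, cf k g₁ = cf k g₂) : cf n (pcomp g₁ f) = cf n (pcomp g₂ f) := by
  rw [coeff_pcomp, coeff_pcomp]
  refine Finset.sum_congr rfl fun k hk => ?_
  rw [Finset.mem_range] at hk
  rw [h k (by omega)]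

lemma pcomp_mul {f : PowerSeries ℝ} (hf : constantCoeff (R := ℝ) f = 0) (g h : PowerSeries ℝ) :
    pcomp (g * h) f = pcomp g f * pcomp h f := by
  ext n
  set p := PowerSeries.trunc (n+1) g with hp
  set q := PowerSeries.trunc (n+1) h with hq
  have hcp : ∀ k ≤ n, cf k (↑p : PowerSeries ℝ) = cf k g := by
    intro k hk
    rw [Polynomial.coeff_coe, PowerSeries.coeff_trunc, if_pos (by omega)]
  have hcq : ∀ k ≤ n, cf k (↑q : PowerSeries ℝ) = cf k h := by
    intro k hk
    rw [Polynomial.coeff_coe, PowerSeries.coeff_trunc, if_pos (by omega)]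
  have e1 : cf n (pcomp (g * h) f) = cf n (pcomp (↑(p * q)) f) := by
    apply coeff_pcomp_congr
    intro k hk
    rw [Polynomial.coe_mul, PowerSeries.coeff_mul, PowerSeries.coeff_mul]
    refine Finset.sum_congr rfl fun z hz => ?_
    rw [Finset.HasAntidiagonal.mem_antidiagonal] at hz
    rw [hcp z.1 (by omega), hcq z.2 (by omega)]
  have e2 : cf n (pcomp g f * pcomp h f) = cf n (pcomp (↑p) f * pcomp (↑q) f) := by
    rw [PowerSeries.coeff_mul, PowerSeries.coeff_mul]
    refine Finset.sum_congr rfl fun z hz => ?_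
    rw [Finset.HasAntidiagonal.mem_antidiagonal] at hz
    rw [coeff_pcomp_congr (n := z.1) fun k hk => hcp k (by omega),
      coeff_pcomp_congr (n := z.2) fun k hk => hcq k (by omega)]
  rw [e1, e2, pcomp_coe hf, pcomp_coe hf, pcomp_coe hf, map_mul]

lemma pcomp_pow {f : PowerSeries ℝ} (hf : constantCoeff (R := ℝ) f = 0) (g : PowerSeries ℝ) (k : ℕ) :
    pcomp (g ^ k) f = pcomp g f ^ k := by
  induction k with
  | zero => simpa using pcomp_one f
  | succ k ih => rw [pow_succ, pow_succ, pcomp_mul hf, ih]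

lemma pcomp_assoc {g f : PowerSeries ℝ} (hg : constantCoeff (R := ℝ) g = 0)
    (hf : constantCoeff (R := ℝ) f = 0) (h : PowerSeries ℝ) :
    pcomp (pcomp h g) f = pcomp h (pcomp g f) := by
  ext n
  rw [coeff_pcomp, coeff_pcomp]
  have e1 : ∀ k ∈ range (n+1), cf k (pcomp h g) * cf n (f ^ k)
      = ∑ m ∈ range (n+1), cf m h * (cf k (g ^ m) * cf n (f ^ k)) := by
    intro k hk
    rw [Finset.mem_range] at hk
    rw [coeff_pcomp, Finset.sum_mul]
    rw [← Finset.sum_subset (Finset.range_subset_range.2 (by omega : k + 1 ≤ n + 1))]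
    · exact Finset.sum_congr rfl fun m _ => by ring
    · intro m _ hm
      rw [Finset.mem_range, not_lt] at hm
      rw [coeff_pow_eq_zero hg (by omega), zero_mul, mul_zero]
  rw [Finset.sum_congr rfl e1, Finset.sum_comm]
  refine Finset.sum_congr rfl fun m _ => ?_
  rw [← pcomp_pow hf, coeff_pcomp, Finset.mul_sum]



lemma dfall_succ (l x : ℝ) (n : ℕ) : dfall l x (n+1) = dfall l x n * (x - n * l) := by
  rw [dfall, Finset.prod_range_succ, ← dfall]

lemma dfall_one_nat (p i : ℕ) : dfall 1 (p:ℝ) i = (p.descFactorial i : ℝ) := by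
  induction i with
  | zero => simp [dfall]
  | succ i ih =>
    rw [dfall_succ, ih, Nat.descFactorial_succ]
    rcases lt_or_ge i p with h | h
    · rw [Nat.cast_mul, Nat.cast_sub (le_of_lt h)]; push_cast; ring
    · rcases eq_or_lt_of_le h with rfl | h2
      · simp
      · rw [Nat.descFactorial_eq_zero_iff_lt.2 h2, Nat.sub_eq_zero_of_le (by omega)]
        push_cast; ring

lemma poly_ext_nat {P Q : Polynomial ℝ} (h : ∀ m : ℕ, P.eval (m:ℝ) = Q.eval (m:ℝ)) : P = Q := by
  apply Polynomial.eq_of_infinite_eval_eq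
  apply Set.Infinite.mono (s := Set.range ((↑) : ℕ → ℝ))
  · rintro _ ⟨m, rfl⟩; exact h m
  · exact Set.infinite_range_of_injective Nat.cast_injective

lemma nat_to_real {F G : ℝ → ℝ} (PF QF : Polynomial ℝ) (hF : ∀ a, F a = PF.eval a)
    (hG : ∀ a, G a = QF.eval a) (h : ∀ m : ℕ, F (m:ℝ) = G (m:ℝ)) : ∀ a, F a = G a := by
  intro a
  rw [hF, hG]
  exact congrArg (Polynomial.eval a) (poly_ext_nat fun m => by rw [← hF, ← hG]; exact h m)

def dfp (k : ℕ) : Polynomial ℝ := ∏ i ∈ range k, (Polynomial.X - Polynomial.C (i:ℝ))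

lemma dfp_eval (a : ℝ) (k : ℕ) : (dfp k).eval a = dfall 1 a k := by
  simp [dfp, dfall, Polynomial.eval_prod]

lemma vdm_nat (p q n : ℕ) :
    ∑ i ∈ range (n+1), (n.choose i : ℝ) * dfall 1 (p:ℝ) i * dfall 1 (q:ℝ) (n-i)
      = dfall 1 ((p:ℝ)+(q:ℝ)) n := by
  have hc : ((p:ℝ)+(q:ℝ)) = ((p+q:ℕ):ℝ) := by push_cast; ring
  rw [hc, dfall_one_nat, Nat.descFactorial_eq_factorial_mul_choose, Nat.add_choose_eq,
    Finset.Nat.sum_antidiagonal_eq_sum_range_succ_mk]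
  push_cast
  rw [Finset.mul_sum]
  refine Finset.sum_congr rfl fun i hi => ?_
  rw [Finset.mem_range] at hi
  rw [dfall_one_nat, dfall_one_nat, Nat.descFactorial_eq_factorial_mul_choose,
    Nat.descFactorial_eq_factorial_mul_choose,
    ← Nat.choose_mul_factorial_mul_factorial (by omega : i ≤ n)]
  push_cast
  ring

lemma vdm (a b : ℝ) (n : ℕ) :
    ∑ i ∈ range (n+1), (n.choose i : ℝ) * dfall 1 a i * dfall 1 b (n-i)
      = dfall 1 (a+b) n := by
  -- step B : b a natural
  have stepB : ∀ (q : ℕ) (a : ℝ),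
      ∑ i ∈ range (n+1), (n.choose i : ℝ) * dfall 1 a i * dfall 1 (q:ℝ) (n-i)
        = dfall 1 (a+(q:ℝ)) n := by
    intro q
    apply nat_to_real
      (PF := ∑ i ∈ range (n+1), Polynomial.C ((n.choose i : ℝ) * dfall 1 (q:ℝ) (n-i)) * dfp i)
      (QF := ∏ j ∈ range n, (Polynomial.X + Polynomial.C ((q:ℝ) - (j:ℝ))))
    · intro a
      rw [Polynomial.eval_finset_sum]
      refine Finset.sum_congr rfl fun i _ => ?_
      rw [Polynomial.eval_mul, Polynomial.eval_C, dfp_eval]; try ring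
    · intro a
      rw [Polynomial.eval_prod, dfall]
      exact Finset.prod_congr rfl fun j _ => by
        rw [Polynomial.eval_add, Polynomial.eval_X, Polynomial.eval_C]; ring
    · intro m; exact vdm_nat m q n
  -- step C : general
  revert b
  apply nat_to_real
    (PF := ∑ i ∈ range (n+1), Polynomial.C ((n.choose i : ℝ) * dfall 1 a i) * dfp (n-i))
    (QF := ∏ j ∈ range n, (Polynomial.X + Polynomial.C (a - (j:ℝ))))
  · intro b
    rw [Polynomial.eval_finset_sum]
    refine Finset.sum_congr rfl fun i _ => ?_
    rw [Polynomial.eval_mul, Polynomial.eval_C, dfp_eval]; try ring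
  · intro b
    rw [Polynomial.eval_prod, dfall]
    exact Finset.prod_congr rfl fun j _ => by
      rw [Polynomial.eval_add, Polynomial.eval_X, Polynomial.eval_C]; ring
  · intro q
    rw [stepB q a, add_comm a (q:ℝ)]


def bser (a : ℝ) : PowerSeries ℝ := PowerSeries.mk fun n => dfall 1 a n / n !

lemma coeff_bser (a : ℝ) (n : ℕ) : cf n (bser a) = dfall 1 a n / n ! := by
  simp [bser]

lemma bser_zero : bser 0 = 1 := by
  ext n
  rcases Nat.eq_zero_or_pos n with rfl | hn
  · simp [coeff_bser, dfall]
  · rw [coeff_bser, dfall, Finset.prod_eq_zero (Finset.mem_range.2 hn) (by simp),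
      PowerSeries.coeff_one, if_neg (by omega)]
    simp

lemma bser_one : bser 1 = 1 + X := by
  ext n
  match n with
  | 0 => simp [coeff_bser, dfall]
  | 1 => simp [coeff_bser, dfall]
  | (m+2) =>
    rw [coeff_bser, dfall, Finset.prod_eq_zero (i := 1) (Finset.mem_range.2 (by omega))
      (by norm_num)]
    simp [PowerSeries.coeff_one, PowerSeries.coeff_X]

lemma constantCoeff_bser_sub_one (a : ℝ) : constantCoeff (R := ℝ) (bser a - 1) = 0 := by
  simp [← PowerSeries.coeff_zero_eq_constantCoeff, coeff_bser, dfall]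

lemma bser_mul (a b : ℝ) : bser a * bser b = bser (a + b) := by
  ext n
  rw [PowerSeries.coeff_mul, Finset.Nat.sum_antidiagonal_eq_sum_range_succ_mk, coeff_bser,
    eq_div_iff (by positivity : ((n ! : ℝ)) ≠ 0), ← vdm a b n, Finset.sum_mul]
  refine Finset.sum_congr rfl fun i hi => ?_
  rw [Finset.mem_range] at hi
  rw [coeff_bser, coeff_bser, Nat.cast_choose ℝ (by omega : i ≤ n)]
  have h1 : ((i ! : ℝ)) ≠ 0 := by positivity
  have h2 : (((n - i)! : ℝ)) ≠ 0 := by positivity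
  field_simp

lemma bser_pow (b : ℝ) (m : ℕ) : bser b ^ m = bser ((m : ℝ) * b) := by
  induction m with
  | zero => simp [bser_zero]
  | succ m ih =>
    rw [pow_succ, ih, bser_mul]
    push_cast
    ring_nf

lemma bser_nat (m : ℕ) : bser (m : ℝ) = (1 + X) ^ m := by
  induction m with
  | zero => simp [bser_zero]
  | succ m ih =>
    have : ((m : ℝ) + 1) = (m : ℝ) + 1 := rfl
    push_cast
    rw [← bser_mul, ih, bser_one, pow_succ]

lemma pcomp_one_add_X_pow {f : PowerSeries ℝ} (hf : constantCoeff (R := ℝ) f = 0) (m : ℕ) :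
    pcomp ((1 + X) ^ m) f = (1 + f) ^ m := by
  rw [pcomp_pow hf, pcomp_add, pcomp_one, pcomp_X hf]

lemma bser_pcomp (b a : ℝ) : pcomp (bser a) (bser b - 1) = bser (a * b) := by
  have hb : constantCoeff (R := ℝ) (bser b - 1) = 0 := constantCoeff_bser_sub_one b
  ext n
  have key : ∀ m : ℕ, cf n (pcomp (bser (m:ℝ)) (bser b - 1)) = cf n (bser ((m:ℝ) * b)) := by
    intro m
    rw [bser_nat, pcomp_one_add_X_pow hb]
    have : (1 : PowerSeries ℝ) + (bser b - 1) = bser b := by ring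
    rw [this, bser_pow]
  have := nat_to_real
    (F := fun a => cf n (pcomp (bser a) (bser b - 1)))
    (G := fun a => cf n (bser (a * b)))
    (PF := ∑ k ∈ range (n+1), Polynomial.C (cf n ((bser b - 1) ^ k) / (k ! : ℝ)) * dfp k)
    (QF := Polynomial.C (1 / (n ! : ℝ)) * ∏ j ∈ range n, (Polynomial.C b * Polynomial.X - Polynomial.C (j:ℝ)))
    (hF := ?_) (hG := ?_) (h := key) a
  · exact this
  · intro a
    beta_reduce
    rw [coeff_pcomp, Polynomial.eval_finset_sum]
    refine Finset.sum_congr rfl fun k _ => ?_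
    rw [Polynomial.eval_mul, Polynomial.eval_C, dfp_eval, coeff_bser]
    ring
  · intro a
    beta_reduce
    rw [coeff_bser, Polynomial.eval_mul, Polynomial.eval_C, Polynomial.eval_prod]
    rw [dfall]
    have : ∀ j ∈ range n, (a * b - (j:ℝ) * 1)
        = Polynomial.eval a (Polynomial.C b * Polynomial.X - Polynomial.C (j:ℝ)) := by
      intro j _; simp; ring
    rw [Finset.prod_congr rfl this]
    ring





lemma dfall_scale {l : ℝ} (hl : l ≠ 0) (x : ℝ) (n : ℕ) :
    dfall l x n = l ^ n * dfall 1 (x / l) n := by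
  have h : ∀ i ∈ range n, x - (i:ℝ) * l = l * (x / l - (i:ℝ) * 1) := by
    intro i _; field_simp
  rw [dfall, Finset.prod_congr rfl h, Finset.prod_mul_distrib, Finset.prod_const,
    Finset.card_range, dfall]

lemma coeff_pcomp_CX (g : PowerSeries ℝ) (l : ℝ) (n : ℕ) :
    cf n (pcomp g (PowerSeries.C (R := ℝ) l * X)) = l ^ n * cf n g := by
  rw [coeff_pcomp, Finset.sum_eq_single n]
  · rw [mul_pow, ← map_pow, PowerSeries.coeff_C_mul, PowerSeries.coeff_X_pow, if_pos rfl]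
    ring
  · intro k _ hk
    rw [mul_pow, ← map_pow, PowerSeries.coeff_C_mul, PowerSeries.coeff_X_pow,
      if_neg (fun h => hk h.symm), mul_zero, mul_zero]
  · intro h; exact absurd (Finset.self_mem_range_succ n) h

lemma constantCoeff_CX (l : ℝ) : constantCoeff (R := ℝ) (PowerSeries.C (R := ℝ) l * X) = 0 := by
  simp

lemma degExp_eq {l : ℝ} (hl : l ≠ 0) (x : ℝ) :
    degExp l x = pcomp (bser (x / l)) (PowerSeries.C (R := ℝ) l * X) := by
  ext n
  rw [coeff_pcomp_CX, coeff_bser]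
  simp only [degExp, PowerSeries.coeff_mk]
  rw [dfall_scale hl]
  ring

lemma degLog_eq {l : ℝ} (hl : l ≠ 0) :
    degLog l = PowerSeries.C (R := ℝ) (1 / l) * (bser l - 1) := by
  ext n
  rw [PowerSeries.coeff_C_mul, map_sub]
  match n with
  | 0 => simp [degLog, coeff_bser, dfall]
  | (m+1) =>
    rw [PowerSeries.coeff_one, if_neg (by omega), coeff_bser]
    simp only [degLog, PowerSeries.coeff_mk, if_neg (by omega : ¬ m + 1 = 0)]
    have : dfall 1 l (m+1) = (∏ i ∈ range m, (l - ((i:ℝ) + 1))) * l := by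
      rw [dfall, Finset.prod_range_succ']
      push_cast
      norm_num
    rw [this]
    have hm : ((m+1)! : ℝ) ≠ 0 := by positivity
    field_simp
    simp
  
def Aser (l : ℝ) : PowerSeries ℝ := degExp l 1 - 1

lemma constantCoeff_Aser (l : ℝ) : constantCoeff (R := ℝ) (Aser l) = 0 := by
  simp [Aser, ← PowerSeries.coeff_zero_eq_constantCoeff, degExp, dfall]

lemma Aser_eq {l : ℝ} (hl : l ≠ 0) :
    Aser l = pcomp (bser (1 / l) - 1) (PowerSeries.C (R := ℝ) l * X) := by
  rw [pcomp_sub, pcomp_one, Aser, degExp_eq hl 1]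

lemma key_inv {l : ℝ} (hl : l ≠ 0) : pcomp (degLog l) (Aser l) = X := by
  rw [degLog_eq hl, pcomp_smul, pcomp_sub, pcomp_one]
  have h1 : pcomp (bser l) (Aser l) = 1 + PowerSeries.C (R := ℝ) l * X := by
    rw [Aser_eq hl, ← pcomp_assoc (constantCoeff_bser_sub_one _) (constantCoeff_CX l),
      bser_pcomp, mul_one_div, div_self hl, bser_one, pcomp_add, pcomp_one,
      pcomp_X (constantCoeff_CX l)]
  rw [h1]
  have : (1 : PowerSeries ℝ) + PowerSeries.C (R := ℝ) l * X - 1 = PowerSeries.C (R := ℝ) l * X := by ring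
  rw [this, ← mul_assoc, ← map_mul]
  rw [one_div, inv_mul_cancel₀ hl, map_one, one_mul]

def CAser (l : ℝ) : PowerSeries ℝ := pcomp (Aser l) (Aser l)

lemma constantCoeff_CAser (l : ℝ) : constantCoeff (R := ℝ) (CAser l) = 0 := by
  rw [CAser, constantCoeff_pcomp _ _ (constantCoeff_Aser l)]
  exact constantCoeff_Aser l

lemma constantCoeff_ClA {l : ℝ} : constantCoeff (R := ℝ) (PowerSeries.C (R := ℝ) l * Aser l) = 0 := by
  rw [map_mul, constantCoeff_Aser, mul_zero]

lemma pcomp_CX_Aser (l : ℝ) :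
    pcomp (PowerSeries.C (R := ℝ) l * X) (Aser l) = PowerSeries.C (R := ℝ) l * Aser l := by
  rw [pcomp_smul, pcomp_X (constantCoeff_Aser l)]

lemma CAser_eq {l : ℝ} (hl : l ≠ 0) :
    CAser l = pcomp (bser (1 / l) - 1) (PowerSeries.C (R := ℝ) l * Aser l) := by
  rw [CAser]
  nth_rewrite 1 [Aser_eq hl]
  rw [pcomp_assoc (constantCoeff_CX l) (constantCoeff_Aser l), pcomp_CX_Aser]

lemma key1 {l : ℝ} (hl : l ≠ 0) (x : ℝ) :
    pcomp (degExp l x) (Aser l) = pcomp (bser x) (CAser l) := by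
  rw [degExp_eq hl x, pcomp_assoc (constantCoeff_CX l) (constantCoeff_Aser l), pcomp_CX_Aser,
    CAser_eq hl, ← pcomp_assoc (constantCoeff_bser_sub_one _) constantCoeff_ClA, bser_pcomp,
    mul_one_div]

lemma key2 {l : ℝ} (hl : l ≠ 0) : pcomp (degLog l) (CAser l) = Aser l := by
  rw [CAser, ← pcomp_assoc (constantCoeff_Aser l) (constantCoeff_Aser l), key_inv hl,
    pcomp_X (constantCoeff_Aser l)]

lemma coeff_divT (f : PowerSeries ℝ) (n : ℕ) : cf n (divT f) = cf (n+1) f := by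
  simp [divT]

lemma X_mul_divT {f : PowerSeries ℝ} (hf : constantCoeff (R := ℝ) f = 0) : X * divT f = f := by
  ext n
  match n with
  | 0 =>
    rw [← PowerSeries.coeff_zero_eq_constantCoeff] at hf
    simp [PowerSeries.coeff_zero_eq_constantCoeff, map_mul, hf]
  | (m+1) => rw [PowerSeries.coeff_succ_X_mul, coeff_divT]

lemma X_cancel {a b : PowerSeries ℝ} (h : X * a = X * b) : a = b := by
  ext n
  have := congrArg (cf (n+1)) h
  rwa [PowerSeries.coeff_succ_X_mul, PowerSeries.coeff_succ_X_mul] at this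


lemma coeff_one_Aser (l : ℝ) : cf 1 (Aser l) = 1 := by
  rw [Aser, map_sub, PowerSeries.coeff_one, if_neg one_ne_zero, sub_zero]
  simp [degExp, dfall]

lemma coeff_one_CAser (l : ℝ) : cf 1 (CAser l) = 1 := by
  rw [CAser, coeff_pcomp, Finset.sum_range_succ, Finset.sum_range_one, pow_zero, pow_one,
    PowerSeries.coeff_one, if_neg one_ne_zero, mul_zero, zero_add, coeff_one_Aser, mul_one]

lemma constantCoeff_degLog (l : ℝ) : constantCoeff (R := ℝ) (degLog l) = 0 := by
  simp [← PowerSeries.coeff_zero_eq_constantCoeff, degLog]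

lemma coeff_one_degLog (l : ℝ) : cf 1 (degLog l) = 1 := by
  simp [degLog]

lemma constantCoeff_divT (f : PowerSeries ℝ) : constantCoeff (R := ℝ) (divT f) = cf 1 f := by
  rw [← PowerSeries.coeff_zero_eq_constantCoeff, coeff_divT]

lemma pcomp_inv {u f : PowerSeries ℝ} (hu : constantCoeff (R := ℝ) u ≠ 0)
    (hf : constantCoeff (R := ℝ) f = 0) : pcomp u⁻¹ f = (pcomp u f)⁻¹ := by
  have h1 : pcomp u⁻¹ f * pcomp u f = 1 := by
    rw [← pcomp_mul hf, PowerSeries.inv_mul_cancel u hu, pcomp_one]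
  exact (PowerSeries.eq_inv_iff_mul_eq_one (by rwa [constantCoeff_pcomp _ _ hf])).2 h1

lemma divT_identity1 {l : ℝ} (hl : l ≠ 0) :
    divT (Aser l) * pcomp (divT (Aser l)) (Aser l) = divT (CAser l) := by
  apply X_cancel
  rw [← mul_assoc, X_mul_divT (constantCoeff_Aser l), X_mul_divT (constantCoeff_CAser l), CAser]
  nth_rewrite 4 [← X_mul_divT (constantCoeff_Aser l)]
  rw [pcomp_mul (constantCoeff_Aser l), pcomp_X (constantCoeff_Aser l)]

lemma divT_identity2 {l : ℝ} (hl : l ≠ 0) :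
    divT (CAser l) * pcomp (divT (degLog l)) (CAser l) = divT (Aser l) := by
  apply X_cancel
  rw [← mul_assoc, X_mul_divT (constantCoeff_CAser l), X_mul_divT (constantCoeff_Aser l),
    ← key2 hl]
  nth_rewrite 2 [← X_mul_divT (constantCoeff_degLog l)]
  rw [pcomp_mul (constantCoeff_CAser l), pcomp_X (constantCoeff_CAser l)]

lemma divT_CAser_ne (l : ℝ) : divT (CAser l) ≠ 0 := by
  intro h
  have := constantCoeff_divT (CAser l)
  rw [h, map_zero, coeff_one_CAser] at this
  exact one_ne_zero this.symm

lemma constantCoeff_pcomp_divT_Aser (l : ℝ) :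
    constantCoeff (R := ℝ) (pcomp (divT (Aser l)) (Aser l)) = 1 := by
  rw [constantCoeff_pcomp _ _ (constantCoeff_Aser l), constantCoeff_divT, coeff_one_Aser]

lemma constantCoeff_pcomp_divT_degLog (l : ℝ) :
    constantCoeff (R := ℝ) (pcomp (divT (degLog l)) (CAser l)) = 1 := by
  rw [constantCoeff_pcomp _ _ (constantCoeff_CAser l), constantCoeff_divT, coeff_one_degLog]

lemma pcompM {l : ℝ} (hl : l ≠ 0) :
    pcomp (divT (Aser l))⁻¹ (Aser l) = pcomp (divT (degLog l)) (CAser l) := by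
  have hu : constantCoeff (R := ℝ) (divT (Aser l)) ≠ 0 := by
    rw [constantCoeff_divT, coeff_one_Aser]; exact one_ne_zero
  rw [pcomp_inv hu (constantCoeff_Aser l)]
  symm
  rw [PowerSeries.eq_inv_iff_mul_eq_one (by rw [constantCoeff_pcomp_divT_Aser]; exact one_ne_zero)]
  apply mul_left_cancel₀ (divT_CAser_ne l)
  rw [← mul_assoc, divT_identity2 hl, divT_identity1 hl, mul_one]

lemma M_mul_CA {l : ℝ} (hl : l ≠ 0) :
    pcomp (divT (degLog l)) (CAser l) * CAser l = Aser l := by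
  nth_rewrite 2 [← X_mul_divT (constantCoeff_CAser l)]
  have h : pcomp (divT (degLog l)) (CAser l) * (X * divT (CAser l))
      = X * (divT (CAser l) * pcomp (divT (degLog l)) (CAser l)) := by ring
  rw [h, divT_identity2 hl, X_mul_divT (constantCoeff_Aser l)]






lemma coeff_Aser {l : ℝ} {p : ℕ} (hp : 1 ≤ p) : cf p (Aser l) = dfall l 1 p / p ! := by
  rw [Aser, map_sub, PowerSeries.coeff_one, if_neg (by omega), sub_zero]
  simp [degExp]

lemma dBell_eq (l : ℝ) (n : ℕ) (x : ℝ) :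
    dBell l n x = n ! * cf n (pcomp (degExp l x) (Aser l)) := by
  rw [dBell, coeff_pcomp, Finset.mul_sum]
  refine Finset.sum_congr rfl fun k _ => ?_
  have h : degExp l 1 - 1 = Aser l := rfl
  rw [dS2, h]
  simp only [degExp, PowerSeries.coeff_mk]
  ring

lemma degExp_zero (l : ℝ) : degExp l 0 = 1 := by
  ext n
  rcases Nat.eq_zero_or_pos n with rfl | hn
  · simp [degExp, dfall]
  · simp only [degExp, PowerSeries.coeff_mk]
    rw [dfall, Finset.prod_eq_zero (Finset.mem_range.2 hn) (by norm_num),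
      PowerSeries.coeff_one, if_neg (by omega)]
    norm_num

lemma firstsum_eq (l : ℝ) (n : ℕ) :
    ∑ j ∈ range (n+1), dBernoulliPoly l j 0 * dS2 l n j
      = n ! * cf n (pcomp (divT (Aser l))⁻¹ (Aser l)) := by
  rw [coeff_pcomp, Finset.mul_sum]
  refine Finset.sum_congr rfl fun j _ => ?_
  have h : degExp l 1 - 1 = Aser l := rfl
  rw [dBernoulliPoly, dS2, h, degExp_zero, mul_one]
  have hj : ((j)! : ℝ) ≠ 0 := by positivity
  field_simp

lemma conv_eq (l : ℝ) (n : ℕ) (G : PowerSeries ℝ) :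
    (n ! : ℝ) * cf n (Aser l * G)
      = ∑ j ∈ range n, (n.choose j : ℝ) * dfall l 1 (n-j) * ((j)! * cf j G) := by
  rw [mul_comm (Aser l) G, PowerSeries.coeff_mul,
    Finset.Nat.sum_antidiagonal_eq_sum_range_succ_mk, Finset.sum_range_succ,
    show cf (n - n) (Aser l) = 0 from by
      rw [Nat.sub_self, PowerSeries.coeff_zero_eq_constantCoeff, constantCoeff_Aser],
    mul_zero, add_zero, Finset.mul_sum]
  refine Finset.sum_congr rfl fun j hj => ?_
  rw [Finset.mem_range] at hj
  rw [coeff_Aser (by omega : 1 ≤ n - j), Nat.cast_choose ℝ (by omega : j ≤ n)]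
  have h1 : ((j)! : ℝ) ≠ 0 := by positivity
  have h2 : (((n-j))! : ℝ) ≠ 0 := by positivity
  field_simp

lemma inner_sum (l : ℝ) (m j : ℕ) :
    ∑ i ∈ range (m+1), (m.choose i : ℝ) * (-1:ℝ)^(m-i) * cf j ((1 + CAser l)^i)
      = cf j (CAser l ^ m) := by
  have h : CAser l ^ m = (1 + CAser l - 1)^m := by ring_nf
  rw [h, sub_pow, map_sum]
  refine Finset.sum_congr rfl fun i hi => ?_
  rw [Finset.mem_range] at hi
  rw [one_pow, mul_one, ← map_natCast (PowerSeries.C (R := ℝ)) (m.choose i),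
    show ((-1 : PowerSeries ℝ))^(i+m) = PowerSeries.C (R := ℝ) ((-1:ℝ)^(i+m)) from by
      rw [map_pow, map_neg, map_one],
    mul_comm (PowerSeries.C (R := ℝ) ((-1:ℝ)^(i+m)) * (1 + CAser l)^i) (PowerSeries.C (R := ℝ) (m.choose i : ℝ)),
    ← mul_assoc, ← map_mul, PowerSeries.coeff_C_mul]
  have hsign : (-1:ℝ)^(i+m) = (-1:ℝ)^(m-i) := by
    have h2 : i + m = (m - i) + 2*i := by omega
    rw [h2, pow_add, pow_mul, neg_one_sq, one_pow, mul_one]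
  rw [hsign]

lemma ck_eq {l : ℝ} (hl : l ≠ 0) (n m : ℕ) :
    ∑ j ∈ range n, ∑ i ∈ range (m+1),
        (n.choose j : ℝ) * ((m.choose i : ℕ) : ℝ) * dfall l 1 (n-j) * (-1:ℝ)^(m-i) * dBell l j (i:ℝ)
      = n ! * cf n (Aser l * CAser l ^ m) := by
  rw [conv_eq l n (CAser l ^ m)]
  refine Finset.sum_congr rfl fun j hj => ?_
  have ha : ∀ i : ℕ, dBell l j (i:ℝ) = (j)! * cf j ((1 + CAser l)^i) := by
    intro i
    rw [dBell_eq, key1 hl, bser_nat, pcomp_one_add_X_pow (constantCoeff_CAser l)]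
  rw [← inner_sum l m j, Finset.mul_sum, Finset.mul_sum]
  refine Finset.sum_congr rfl fun i hi => ?_
  rw [ha i]
  ring

lemma coeff_zero_Gb (l x : ℝ) :
    cf 0 ((divT (degLog l))⁻¹ * PowerSeries.mk fun j => dfall 1 x j / j !) = 1 := by
  rw [PowerSeries.coeff_zero_eq_constantCoeff, map_mul, PowerSeries.constantCoeff_inv,
    constantCoeff_divT, coeff_one_degLog]
  have h : constantCoeff (R := ℝ) (PowerSeries.mk fun j => dfall 1 x j / j !) = 1 := by
    simp [← PowerSeries.coeff_zero_eq_constantCoeff, dfall]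
  rw [h]
  norm_num

theorem main (l : ℝ) (hl : l ≠ 0) (n : ℕ) (x : ℝ) :
    dBell l n x =
      (∑ j ∈ range (n + 1), dBernoulliPoly l j 0 * dS2 l n j) +
        ∑ k ∈ Icc 1 n,
          (1 / (k ! : ℝ) *
              ∑ j ∈ range n, ∑ i ∈ range k,
                n.choose j * (k - 1).choose i * dfall l 1 (n - j) * (-1 : ℝ) ^ (k - 1 - i) *
                  dBell l j (i : ℝ)) *
            dBern2 l k x := by
  have hCA0 := constantCoeff_CAser l
  have hLdne : constantCoeff (R := ℝ) (divT (degLog l)) ≠ 0 := by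
    rw [constantCoeff_divT, coeff_one_degLog]; exact one_ne_zero
  have hM : constantCoeff (R := ℝ) (pcomp (divT (degLog l)) (CAser l)) ≠ 0 := by
    rw [constantCoeff_pcomp_divT_degLog]; exact one_ne_zero
  have hbser : (PowerSeries.mk fun j => dfall 1 x j / (j)!) = bser x := rfl
  have e2 : pcomp (degExp l x) (Aser l)
      = pcomp (divT (degLog l)) (CAser l) *
        pcomp ((divT (degLog l))⁻¹ * PowerSeries.mk fun j => dfall 1 x j / j !) (CAser l) := by
    rw [hbser, pcomp_mul hCA0, pcomp_inv hLdne hCA0, ← mul_assoc,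
      PowerSeries.mul_inv_cancel _ hM, one_mul, key1 hl]
  rw [dBell_eq l n x, e2, coeff_mul_pcomp _ _ _ hCA0 n, Finset.mul_sum]
  have hsplit : ∀ F : ℕ → ℝ, ∑ k ∈ range (n+1), F k = F 0 + ∑ k ∈ Icc 1 n, F k := by
    intro F
    rw [Finset.range_eq_Ico, Finset.sum_eq_sum_Ico_succ_bot (Nat.succ_pos n), Nat.succ_eq_add_one, Finset.Ico_add_one_right_eq_Icc, zero_add]
  rw [hsplit]
  congr 1
  · rw [pow_zero, mul_one, coeff_zero_Gb, one_mul, firstsum_eq, pcompM hl]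
  · refine Finset.sum_congr rfl fun k hk => ?_
    rw [Finset.mem_Icc] at hk
    obtain ⟨m, rfl⟩ : ∃ m, k = m + 1 := ⟨k - 1, by omega⟩
    have hpow : pcomp (divT (degLog l)) (CAser l) * CAser l ^ (m+1) = Aser l * CAser l ^ m := by
      rw [_root_.pow_succ', ← mul_assoc, M_mul_CA hl]
    rw [hpow]
    simp only [Nat.add_sub_cancel]
    rw [ck_eq hl n m, dBern2]
    have hm : (((m+1))! : ℝ) ≠ 0 := by positivity
    field_simp

end Stmt8

theorem stmt8 (l : ℝ) (hl : l ≠ 0) (n : ℕ) (x : ℝ) :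
    dBell l n x =
      (∑ j ∈ range (n + 1), dBernoulliPoly l j 0 * dS2 l n j) +
        ∑ k ∈ Icc 1 n,
          (1 / (k ! : ℝ) *
              ∑ j ∈ range n, ∑ i ∈ range k,
                n.choose j * (k - 1).choose i * dfall l 1 (n - j) * (-1 : ℝ) ^ (k - 1 - i) *
                  dBell l j (i : ℝ)) *
            dBern2 l k x := by
  exact Stmt8.main l hl n x

end
end

section
/- Let λ be a nonzero real number, m a positive integer, and p a real polynomial of degree at most n. Then p(x) = Σ_{k=0}^{n} C_k d_{m,λ}(k,x) as polynomials, where C_k = (1/k!) ⟨ (1+mt)^{−1/m} ((1/m) log_{λ/m}(1+mt))^k | p(x) ⟩_λ. -/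
open Nat PowerSeries Finset

noncomputable section

lemma dfall_one_eval (x : ℝ) (n : ℕ) : dfall 1 x n = (descPochhammer ℝ n).eval x := by
  induction n with
  | zero => simp [dfall]
  | succ k ih =>
      rw [dfall_succ, ih, descPochhammer_succ_right]
      simp [mul_comm]

lemma dfall_one_smeval (x : ℝ) (n : ℕ) : dfall 1 x n = (descPochhammer ℤ n).smeval x := by
  induction n with
  | zero => simp [dfall, Polynomial.smeval_one]
  | succ k ih =>
      rw [dfall_succ, ih, descPochhammer_succ_right, Polynomial.smeval_mul]
      simp [Polynomial.smeval_sub, Polynomial.smeval_X, Polynomial.smeval_natCast]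

lemma dfall_nat (N k : ℕ) : dfall 1 (N:ℝ) k = (N.descFactorial k : ℝ) := by
  rw [dfall_one_eval, descPochhammer_eval_eq_descFactorial]

lemma dfall_nat_choose (N k : ℕ) : dfall 1 (N:ℝ) k = (k ! : ℝ) * (N.choose k : ℝ) := by
  rw [dfall_nat, Nat.descFactorial_eq_factorial_mul_choose]; push_cast; ring

lemma dfall_scale {l : ℝ} (hl : l ≠ 0) (x : ℝ) (n : ℕ) :
    dfall l x n = l ^ n * dfall 1 (x/l) n := by
  rw [dfall, dfall]
  rw [show l ^ n = ∏ _i ∈ range n, l by rw [Finset.prod_const, Finset.card_range],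
    ← Finset.prod_mul_distrib]
  refine Finset.prod_congr rfl fun i _ => ?_
  field_simp

lemma dfall_add (a b : ℝ) (n : ℕ) :
    dfall 1 (a+b) n = ∑ ij ∈ Finset.HasAntidiagonal.antidiagonal n,
      (n.choose ij.1 : ℝ) * (dfall 1 a ij.1 * dfall 1 b ij.2) := by
  rw [dfall_one_smeval, Ring.descPochhammer_smeval_add n (Commute.all a b)]
  refine Finset.sum_congr rfl fun ij _ => by rw [dfall_one_smeval, dfall_one_smeval]

def Bser (a c : ℝ) : PowerSeries ℝ := PowerSeries.mk fun n => dfall 1 a n * c ^ n / n !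

lemma coeff_Bser (a c : ℝ) (n : ℕ) :
    PowerSeries.coeff (R := ℝ) n (Bser a c) = dfall 1 a n * c ^ n / n ! := coeff_mk _ _

lemma dfall_one_zero {n : ℕ} (hn : n ≠ 0) : dfall 1 0 n = 0 := by
  refine Finset.prod_eq_zero (i := 0) ?_ (by simp)
  simpa using Nat.pos_of_ne_zero hn

lemma Bser_zero (c : ℝ) : Bser 0 c = 1 := by
  ext n
  rcases Nat.eq_zero_or_pos n with h | h
  · subst h; simp [coeff_Bser, dfall_zero]
  · rw [coeff_Bser, dfall_one_zero h.ne', PowerSeries.coeff_one, if_neg h.ne']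
    simp

lemma constantCoeff_Bser (a c : ℝ) : PowerSeries.constantCoeff (R := ℝ) (Bser a c) = 1 := by
  have := coeff_Bser a c 0
  rw [PowerSeries.coeff_zero_eq_constantCoeff] at this
  simp [this, dfall_zero]

lemma Bser_mul (a b c : ℝ) : Bser a c * Bser b c = Bser (a+b) c := by
  ext n
  rw [PowerSeries.coeff_mul, coeff_Bser, dfall_add, Finset.sum_mul, Finset.sum_div]
  refine Finset.sum_congr rfl fun ij hij => ?_
  have hij' : ij.1 + ij.2 = n := Finset.HasAntidiagonal.mem_antidiagonal.mp hij
  subst hij'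
  rw [coeff_Bser, coeff_Bser]
  have key : ((ij.1 + ij.2).choose ij.1 : ℝ) * ij.1 ! * ij.2 ! = (ij.1 + ij.2)! := by
    have := Nat.choose_mul_factorial_mul_factorial (Nat.le_add_right ij.1 ij.2)
    rw [Nat.add_sub_cancel_left] at this
    exact_mod_cast congrArg (Nat.cast : ℕ → ℝ) this
  have h1 : (ij.1 ! : ℝ) ≠ 0 := Nat.cast_ne_zero.mpr (Nat.factorial_ne_zero _)
  have h2 : (ij.2 ! : ℝ) ≠ 0 := Nat.cast_ne_zero.mpr (Nat.factorial_ne_zero _)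
  have h3 : ((ij.1 + ij.2)! : ℝ) ≠ 0 := Nat.cast_ne_zero.mpr (Nat.factorial_ne_zero _)
  field_simp
  rw [pow_add]
  linear_combination (-dfall 1 a ij.1 * dfall 1 b ij.2 * c ^ ij.1 * c ^ ij.2) * key

lemma Bser_pow (a c : ℝ) (N : ℕ) : Bser a c ^ N = Bser (N * a) c := by
  induction N with
  | zero => simp [Bser_zero]
  | succ k ih =>
      rw [pow_succ, ih, Bser_mul]
      push_cast
      ring_nf

lemma coeff_pow_of_lt {f : PowerSeries ℝ} (hf : PowerSeries.constantCoeff (R := ℝ) f = 0)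
    {n k : ℕ} (h : n < k) : PowerSeries.coeff (R := ℝ) n (f ^ k) = 0 := by
  have hd : (PowerSeries.X : PowerSeries ℝ) ^ k ∣ f ^ k :=
    pow_dvd_pow_of_dvd (PowerSeries.X_dvd_iff.mpr hf) k
  exact PowerSeries.X_pow_dvd_iff.mp hd n h

lemma coeff_mul_pow_of_lt {f g : PowerSeries ℝ} (hg : PowerSeries.constantCoeff (R := ℝ) g = 0)
    {n k : ℕ} (h : n < k) : PowerSeries.coeff (R := ℝ) n (f * g ^ k) = 0 := by
  rw [PowerSeries.coeff_mul]
  refine Finset.sum_eq_zero fun p hp => ?_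
  have : p.2 ≤ n := Finset.HasAntidiagonal.antidiagonal.snd_le hp
  rw [coeff_pow_of_lt hg (lt_of_le_of_lt this h), mul_zero]


lemma coeff_psComp (a : ℕ → ℝ) (f : PowerSeries ℝ) (n : ℕ) :
    PowerSeries.coeff (R := ℝ) n (psComp a f) = ∑ k ∈ range (n + 1), a k * PowerSeries.coeff (R := ℝ) n (f ^ k) :=
  coeff_mk _ _

lemma sum_range_antidiagonal_eq (n : ℕ) (g : ℕ × ℕ → ℝ) (hg : ∀ p : ℕ × ℕ, n < p.1 + p.2 → g p = 0) :
    ∑ k ∈ range (n+1), ∑ p ∈ Finset.HasAntidiagonal.antidiagonal k, g p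
      = ∑ p ∈ range (n+1) ×ˢ range (n+1), g p := by
  rw [← Finset.sum_biUnion]
  · refine Finset.sum_subset ?_ ?_
    · intro p hp
      obtain ⟨k, hk, hpk⟩ := Finset.mem_biUnion.mp hp
      have hsum : p.1 + p.2 = k := Finset.HasAntidiagonal.mem_antidiagonal.mp hpk
      have hk' : k ≤ n := Nat.lt_succ_iff.mp (Finset.mem_range.mp hk)
      refine Finset.mem_product.mpr ⟨Finset.mem_range.mpr ?_, Finset.mem_range.mpr ?_⟩
      · omega
      · omega
    · intro p _ hp2
      by_cases h : p.1 + p.2 ≤ n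
      · exfalso
        exact hp2 (Finset.mem_biUnion.mpr ⟨p.1 + p.2, Finset.mem_range.mpr (Nat.lt_succ_of_le h),
          Finset.HasAntidiagonal.mem_antidiagonal.mpr rfl⟩)
      · exact hg p (Nat.lt_of_not_le h)
  · intro i _ j _ hij
    simp only [Finset.disjoint_left]
    intro p hpi hpj
    exact hij ((Finset.HasAntidiagonal.mem_antidiagonal.mp hpi).symm.trans (Finset.HasAntidiagonal.mem_antidiagonal.mp hpj))

lemma psComp_mul (F₁ F₂ f : PowerSeries ℝ) (hf : PowerSeries.constantCoeff (R := ℝ) f = 0) :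
    psComp (fun k => PowerSeries.coeff (R := ℝ) k (F₁ * F₂)) f
      = psComp (fun k => PowerSeries.coeff (R := ℝ) k F₁) f * psComp (fun k => PowerSeries.coeff (R := ℝ) k F₂) f := by
  ext n
  rw [coeff_psComp, PowerSeries.coeff_mul]
  have key : ∀ a b : ℕ, n < a + b → PowerSeries.coeff (R := ℝ) n (f ^ (a + b)) = 0 :=
    fun a b h => coeff_pow_of_lt hf h
  -- middle form
  trans (∑ p ∈ range (n+1) ×ˢ range (n+1),
      PowerSeries.coeff (R := ℝ) p.1 F₁ * PowerSeries.coeff (R := ℝ) p.2 F₂ * PowerSeries.coeff (R := ℝ) n (f ^ (p.1 + p.2)))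
  · rw [← sum_range_antidiagonal_eq n _ (fun p hp => by rw [key p.1 p.2 hp, mul_zero])]
    refine Finset.sum_congr rfl fun k hk => ?_
    rw [PowerSeries.coeff_mul, Finset.sum_mul]
    refine Finset.sum_congr rfl fun p hp => ?_
    rw [Finset.HasAntidiagonal.mem_antidiagonal.mp hp]
  · -- RHS
    have hext : ∀ (F : PowerSeries ℝ) (q : ℕ), q ≤ n →
        PowerSeries.coeff (R := ℝ) q (psComp (fun k => PowerSeries.coeff (R := ℝ) k F) f)
          = ∑ a ∈ range (n+1), PowerSeries.coeff (R := ℝ) a F * PowerSeries.coeff (R := ℝ) q (f ^ a) := by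
      intro F q hq
      rw [coeff_psComp]
      refine Finset.sum_subset (by intro a ha; simp only [Finset.mem_range] at *; omega) ?_
      intro a ha ha'
      have : q < a := by simp only [Finset.mem_range] at *; omega
      rw [coeff_pow_of_lt hf this, mul_zero]
    rw [Finset.sum_product]
    symm
    calc ∑ q ∈ Finset.HasAntidiagonal.antidiagonal n,
          PowerSeries.coeff (R := ℝ) q.1 (psComp (fun k => PowerSeries.coeff (R := ℝ) k F₁) f) *
          PowerSeries.coeff (R := ℝ) q.2 (psComp (fun k => PowerSeries.coeff (R := ℝ) k F₂) f)
        = ∑ q ∈ Finset.HasAntidiagonal.antidiagonal n, ∑ a ∈ range (n+1), ∑ b ∈ range (n+1),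
            (PowerSeries.coeff (R := ℝ) a F₁ * PowerSeries.coeff (R := ℝ) q.1 (f ^ a)) *
            (PowerSeries.coeff (R := ℝ) b F₂ * PowerSeries.coeff (R := ℝ) q.2 (f ^ b)) := by
          refine Finset.sum_congr rfl fun q hq => ?_
          rw [hext F₁ q.1 (Finset.HasAntidiagonal.antidiagonal.fst_le hq),
            hext F₂ q.2 (Finset.HasAntidiagonal.antidiagonal.snd_le hq), Finset.sum_mul_sum]
      _ = ∑ a ∈ range (n+1), ∑ b ∈ range (n+1), ∑ q ∈ Finset.HasAntidiagonal.antidiagonal n,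
            (PowerSeries.coeff (R := ℝ) a F₁ * PowerSeries.coeff (R := ℝ) q.1 (f ^ a)) *
            (PowerSeries.coeff (R := ℝ) b F₂ * PowerSeries.coeff (R := ℝ) q.2 (f ^ b)) := by
          rw [Finset.sum_comm]
          exact Finset.sum_congr rfl fun a _ => Finset.sum_comm
      _ = ∑ a ∈ range (n+1), ∑ b ∈ range (n+1),
            PowerSeries.coeff (R := ℝ) a F₁ * PowerSeries.coeff (R := ℝ) b F₂ *
              PowerSeries.coeff (R := ℝ) n (f ^ (a + b)) := by
          refine Finset.sum_congr rfl fun a _ => Finset.sum_congr rfl fun b _ => ?_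
          rw [pow_add, PowerSeries.coeff_mul, Finset.mul_sum]
          refine Finset.sum_congr rfl fun q hq => by ring

lemma psComp_one (f : PowerSeries ℝ) :
    psComp (fun k => PowerSeries.coeff (R := ℝ) k (1 : PowerSeries ℝ)) f = 1 := by
  ext n
  rw [coeff_psComp]
  have : ∀ k ∈ range (n+1), PowerSeries.coeff (R := ℝ) k (1 : PowerSeries ℝ) * PowerSeries.coeff (R := ℝ) n (f ^ k)
      = if k = 0 then PowerSeries.coeff (R := ℝ) n (1 : PowerSeries ℝ) else 0 := by
    intro k _
    rcases eq_or_ne k 0 with h | h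
    · subst h; simp
    · simp [PowerSeries.coeff_one, h]
  rw [Finset.sum_congr rfl this, Finset.sum_ite_eq' (range (n+1)) 0]
  simp

lemma psComp_pow (g f : PowerSeries ℝ) (hf : PowerSeries.constantCoeff (R := ℝ) f = 0) (i : ℕ) :
    psComp (fun k => PowerSeries.coeff (R := ℝ) k (g ^ i)) f
      = (psComp (fun k => PowerSeries.coeff (R := ℝ) k g) f) ^ i := by
  induction i with
  | zero => simpa using psComp_one f
  | succ j ih => rw [pow_succ, psComp_mul _ _ _ hf, ih, pow_succ]

lemma psComp_smul (A : ℕ → ℝ) (s : ℝ) (f : PowerSeries ℝ) :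
    psComp (fun k => A k * s) f = psComp A f * PowerSeries.C (R := ℝ) s := by
  ext n
  rw [PowerSeries.coeff_mul_C, coeff_psComp, coeff_psComp, Finset.sum_mul]
  exact Finset.sum_congr rfl fun k _ => by ring

lemma psComp_sub (A A' : ℕ → ℝ) (f : PowerSeries ℝ) :
    psComp (fun k => A k - A' k) f = psComp A f - psComp A' f := by
  ext n
  rw [map_sub, coeff_psComp, coeff_psComp, coeff_psComp, ← Finset.sum_sub_distrib]
  exact Finset.sum_congr rfl fun k _ => by ring

lemma psComp_arg_scale (A : ℕ → ℝ) (s : ℝ) (g : PowerSeries ℝ) :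
    psComp A (g * PowerSeries.C (R := ℝ) s) = psComp (fun k => A k * s ^ k) g := by
  ext n
  rw [coeff_psComp, coeff_psComp]
  refine Finset.sum_congr rfl fun k _ => ?_
  rw [mul_pow, ← map_pow, PowerSeries.coeff_mul_C]
  ring

lemma constantCoeff_Bser_sub_one (a c : ℝ) :
    PowerSeries.constantCoeff (R := ℝ) (Bser a c - 1) = 0 := by
  rw [map_sub, constantCoeff_Bser]; simp

lemma psComp_Bser (e a c : ℝ) :
    psComp (fun k => dfall 1 e k / k !) (Bser a c - 1) = Bser (e * a) c := by
  ext n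
  rw [coeff_psComp, coeff_Bser]
  -- two polynomials in e
  set P : Polynomial ℝ := ∑ k ∈ range (n+1),
    Polynomial.C (PowerSeries.coeff (R := ℝ) n ((Bser a c - 1) ^ k) / k !) * descPochhammer ℝ k with hP
  set Q : Polynomial ℝ :=
    Polynomial.C (c ^ n / n !) * (descPochhammer ℝ n).comp (Polynomial.C a * Polynomial.X) with hQ
  have hPe : ∀ y : ℝ, P.eval y
      = ∑ k ∈ range (n+1), dfall 1 y k / k ! * PowerSeries.coeff (R := ℝ) n ((Bser a c - 1) ^ k) := by
    intro y
    rw [hP, Polynomial.eval_finset_sum]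
    refine Finset.sum_congr rfl fun k _ => ?_
    rw [Polynomial.eval_mul, Polynomial.eval_C, ← dfall_one_eval]
    ring
  have hQe : ∀ y : ℝ, Q.eval y = dfall 1 (y * a) n * c ^ n / n ! := by
    intro y
    rw [hQ, Polynomial.eval_mul, Polynomial.eval_C, Polynomial.eval_comp, Polynomial.eval_mul,
      Polynomial.eval_C, Polynomial.eval_X, ← dfall_one_eval, mul_comm a y]
    ring
  have hPQ : P = Q := by
    apply Polynomial.eq_of_infinite_eval_eq
    apply Set.Infinite.mono (s := Set.range ((↑) : ℕ → ℝ))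
    · rintro _ ⟨N, rfl⟩
      have hnat : ∑ k ∈ range (n+1), dfall 1 (N : ℝ) k / k !
            * PowerSeries.coeff (R := ℝ) n ((Bser a c - 1) ^ k)
          = dfall 1 ((N : ℝ) * a) n * c ^ n / n ! := by
        have hps : Bser a c ^ N = Bser ((N : ℝ) * a) c := Bser_pow a c N
        have hBin : Bser a c ^ N = ((Bser a c - 1) + 1) ^ N := by rw [sub_add_cancel]
        rw [add_pow] at hBin
        have hco : PowerSeries.coeff (R := ℝ) n (Bser ((N : ℝ) * a) c)
            = ∑ k ∈ range (N+1), (N.choose k : ℝ) * PowerSeries.coeff (R := ℝ) n ((Bser a c - 1) ^ k) := by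
          rw [← hps, hBin, map_sum]
          refine Finset.sum_congr rfl fun k _ => ?_
          rw [one_pow, mul_one, ← map_natCast (PowerSeries.C (R := ℝ)) (N.choose k),
            PowerSeries.coeff_mul_C]
          ring
        have hpad : ∀ M : ℕ, n ≤ M → N ≤ M →
            (∑ k ∈ range (N+1), (N.choose k : ℝ) * PowerSeries.coeff (R := ℝ) n ((Bser a c - 1) ^ k))
            = ∑ k ∈ range (M+1), (N.choose k : ℝ)
                * PowerSeries.coeff (R := ℝ) n ((Bser a c - 1) ^ k) := by
          intro M hnM hNM
          refine Finset.sum_subset (by intro t ht; simp only [Finset.mem_range] at *; omega) ?_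
          intro k _ hk
          have : N < k := by simp only [Finset.mem_range] at hk; omega
          rw [Nat.choose_eq_zero_of_lt this]
          simp
        have hpad2 :
            (∑ k ∈ range (n+1), dfall 1 (N:ℝ) k / k !
                * PowerSeries.coeff (R := ℝ) n ((Bser a c - 1) ^ k))
            = ∑ k ∈ range (max n N + 1), (N.choose k : ℝ)
                * PowerSeries.coeff (R := ℝ) n ((Bser a c - 1) ^ k) := by
          have step1 : (∑ k ∈ range (n+1), dfall 1 (N:ℝ) k / k !
                * PowerSeries.coeff (R := ℝ) n ((Bser a c - 1) ^ k))
              = ∑ k ∈ range (n+1), (N.choose k : ℝ)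
                * PowerSeries.coeff (R := ℝ) n ((Bser a c - 1) ^ k) := by
            refine Finset.sum_congr rfl fun k _ => ?_
            rw [dfall_nat_choose]
            have hk : (k ! : ℝ) ≠ 0 := Nat.cast_ne_zero.mpr (Nat.factorial_ne_zero _)
            field_simp
          rw [step1]
          refine Finset.sum_subset ?_ ?_
          · intro t ht
            rw [Finset.mem_range] at *
            exact Nat.lt_succ_of_le (le_trans (Nat.lt_succ_iff.mp ht) (le_max_left n N))
          intro k _ hk
          have : n < k := by
            rcases Nat.lt_or_ge n k with h | h
            · exact h
            · exact absurd (Finset.mem_range.mpr (Nat.lt_succ_of_le h)) hk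
          rw [coeff_pow_of_lt (constantCoeff_Bser_sub_one a c) this, mul_zero]
        rw [hpad2, ← hpad (max n N) (le_max_left _ _) (le_max_right _ _), ← hco, coeff_Bser]
      show (N : ℝ) ∈ {x | P.eval x = Q.eval x}
      rw [Set.mem_setOf_eq, hPe, hQe, hnat]
    · exact Set.infinite_range_of_injective Nat.cast_injective
  have := congrArg (Polynomial.eval e) hPQ
  rw [hPe, hQe] at this
  rw [this]



section Spec

variable {l : ℝ} {m : ℕ}

/-- composition of degExp with G := (Bser (l/m) m - 1) * C (1/l) -/
lemma psComp_degExp (hl : l ≠ 0) (x : ℝ) :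
    psComp (fun k => PowerSeries.coeff (R := ℝ) k (degExp l x))
        ((Bser (l/m) m - 1) * PowerSeries.C (R := ℝ) (1/l))
      = Bser (x / l * (l / m)) (m : ℝ) := by
  have hcoeff : (fun k => PowerSeries.coeff (R := ℝ) k (degExp l x)) = fun k => dfall l x k / k ! := by
    funext k; simp [degExp, coeff_mk]
  rw [hcoeff, psComp_arg_scale]
  have : (fun k => dfall l x k / k ! * (1/l) ^ k) = fun k => dfall 1 (x/l) k / k ! := by
    funext k
    rw [dfall_scale hl]
    have : l ^ k ≠ 0 := pow_ne_zero _ hl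
    field_simp
    ring_nf
    rw [← mul_pow, mul_inv_cancel₀ hl, one_pow, one_mul]
  rw [this, psComp_Bser]

lemma G_eq (hl : l ≠ 0) (hm : 0 < m) :
    PowerSeries.C (R := ℝ) (1/m) * (PowerSeries.mk fun i =>
        (m : ℝ) ^ i * PowerSeries.coeff (R := ℝ) i (degLog (l / m)))
      = (Bser (l/m) m - 1) * PowerSeries.C (R := ℝ) (1/l) := by
  have hmR : (m : ℝ) ≠ 0 := Nat.cast_ne_zero.mpr hm.ne'
  ext n
  rw [PowerSeries.coeff_C_mul, coeff_mk, PowerSeries.coeff_mul_C, map_sub, coeff_Bser]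
  rcases n with _ | k
  · simp [degLog, coeff_mk, dfall_zero]
  · rw [PowerSeries.coeff_one, if_neg (Nat.succ_ne_zero k)]
    simp only [degLog, coeff_mk, if_neg (Nat.succ_ne_zero k)]
    have hprod : dfall 1 (l/m) (k+1) = (l/m) * ∏ j ∈ range k, (l/m - (j+1)) := by
      rw [dfall, Finset.prod_range_succ', mul_comm]
      simp only [Nat.cast_zero, zero_mul, sub_zero, mul_one]
      refine congrArg (l/m * ·) (Finset.prod_congr rfl fun j _ => ?_)
      push_cast
      ring_nf
    rw [Nat.succ_sub_one, hprod]
    have hfac : ((k+1)! : ℝ) ≠ 0 := Nat.cast_ne_zero.mpr (Nat.factorial_ne_zero _)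
    field_simp
    ring

lemma Bser_one_eq (hm : 0 < m) :
    Bser 1 (m : ℝ) = 1 + PowerSeries.C (R := ℝ) (m : ℝ) * PowerSeries.X := by
  ext n
  rw [coeff_Bser, map_add, PowerSeries.coeff_C_mul]
  rcases n with _ | _ | k
  · simp [dfall_zero]
  · simp [dfall_succ, dfall_zero]
  · have h2 : dfall 1 1 (k+2) = 0 := by
      refine Finset.prod_eq_zero (i := 1) (by simp) (by norm_num)
    rw [h2, PowerSeries.coeff_one, PowerSeries.coeff_X]
    simp

lemma constantCoeff_G (hl : l ≠ 0) :
    PowerSeries.constantCoeff (R := ℝ) ((Bser (l/m) m - 1) * PowerSeries.C (R := ℝ) (1/l)) = 0 := by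
  rw [map_mul, constantCoeff_Bser_sub_one]
  simp

/-- the H series composed with G gives X -/
lemma psComp_H (hl : l ≠ 0) (hm : 0 < m) :
    psComp (fun k => PowerSeries.coeff (R := ℝ) k ((degExp l m - 1) * PowerSeries.C (R := ℝ) (1/m)))
        ((Bser (l/m) m - 1) * PowerSeries.C (R := ℝ) (1/l))
      = PowerSeries.X := by
  have hmR : (m : ℝ) ≠ 0 := Nat.cast_ne_zero.mpr hm.ne'
  have hfun : (fun k => PowerSeries.coeff (R := ℝ) k ((degExp l m - 1) * PowerSeries.C (R := ℝ) (1/m)))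
      = fun k => ((PowerSeries.coeff (R := ℝ) k (degExp l (m:ℝ))) -
          (PowerSeries.coeff (R := ℝ) k (1 : PowerSeries ℝ))) * (1/m) := by
    funext k
    rw [PowerSeries.coeff_mul_C, map_sub]
  rw [hfun, psComp_smul, psComp_sub, psComp_degExp hl, psComp_one]
  have harg : (m : ℝ) / l * (l / m) = 1 := by field_simp
  rw [harg, Bser_one_eq hm]
  rw [add_sub_cancel_left, mul_assoc, mul_comm PowerSeries.X (PowerSeries.C (R := ℝ) (1/m)),
    ← mul_assoc, ← map_mul, mul_one_div, div_self hmR, map_one, one_mul]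

lemma FS_eq (hl : l ≠ 0) (hm : 0 < m) (i : ℕ) :
    Bser (-(1/m)) m *
      psComp (fun k => PowerSeries.coeff (R := ℝ) k
          (degExp l 1 * ((degExp l m - 1) * PowerSeries.C (R := ℝ) (1/m)) ^ i))
        ((Bser (l/m) m - 1) * PowerSeries.C (R := ℝ) (1/l))
      = PowerSeries.X ^ i := by
  rw [psComp_mul _ _ _ (constantCoeff_G hl), psComp_pow _ _ (constantCoeff_G hl),
    psComp_degExp hl, psComp_H hl hm]
  have harg : (1 : ℝ) / l * (l / m) = 1/m := by field_simp
  rw [harg, ← mul_assoc, Bser_mul]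
  rw [show -(1/(m:ℝ)) + 1/m = 0 by ring, Bser_zero, one_mul]

/-- the key delta identity -/
lemma delta_id (hl : l ≠ 0) (hm : 0 < m) {n i j : ℕ} (hi : i ≤ n) (hj : j ≤ n) :
    ∑ k ∈ range (n+1),
        PowerSeries.coeff (R := ℝ) j
            (Bser (-(1/m)) m * ((Bser (l/m) m - 1) * PowerSeries.C (R := ℝ) (1/l)) ^ k) *
          PowerSeries.coeff (R := ℝ) k
            (degExp l 1 * ((degExp l m - 1) * PowerSeries.C (R := ℝ) (1/m)) ^ i)
      = if j = i then 1 else 0 := by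
  set G : PowerSeries ℝ := (Bser (l/m) m - 1) * PowerSeries.C (R := ℝ) (1/l) with hG
  set EH : PowerSeries ℝ := degExp l 1 * ((degExp l m - 1) * PowerSeries.C (R := ℝ) (1/m)) ^ i with hEH
  have key : ∑ k ∈ range (n+1),
      PowerSeries.coeff (R := ℝ) j (Bser (-(1/m)) m * G ^ k) * PowerSeries.coeff (R := ℝ) k EH
      = PowerSeries.coeff (R := ℝ) j (Bser (-(1/m)) m * psComp (fun k => PowerSeries.coeff (R := ℝ) k EH) G) := by
    rw [PowerSeries.coeff_mul]
    have step : ∀ k, PowerSeries.coeff (R := ℝ) j (Bser (-(1/m)) m * G ^ k)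
        = ∑ p ∈ Finset.HasAntidiagonal.antidiagonal j,
            PowerSeries.coeff (R := ℝ) p.1 (Bser (-(1/m)) m) * PowerSeries.coeff (R := ℝ) p.2 (G ^ k) :=
      fun k => PowerSeries.coeff_mul _ _ _
    calc ∑ k ∈ range (n+1),
          PowerSeries.coeff (R := ℝ) j (Bser (-(1/m)) m * G ^ k) * PowerSeries.coeff (R := ℝ) k EH
        = ∑ k ∈ range (n+1), ∑ p ∈ Finset.HasAntidiagonal.antidiagonal j,
            PowerSeries.coeff (R := ℝ) p.1 (Bser (-(1/m)) m) * PowerSeries.coeff (R := ℝ) p.2 (G ^ k) *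
              PowerSeries.coeff (R := ℝ) k EH := by
          refine Finset.sum_congr rfl fun k _ => ?_
          rw [step k, Finset.sum_mul]
      _ = ∑ p ∈ Finset.HasAntidiagonal.antidiagonal j, ∑ k ∈ range (n+1),
            PowerSeries.coeff (R := ℝ) p.1 (Bser (-(1/m)) m) * PowerSeries.coeff (R := ℝ) p.2 (G ^ k) *
              PowerSeries.coeff (R := ℝ) k EH := Finset.sum_comm
      _ = ∑ p ∈ Finset.HasAntidiagonal.antidiagonal j,
            PowerSeries.coeff (R := ℝ) p.1 (Bser (-(1/m)) m) *
              PowerSeries.coeff (R := ℝ) p.2 (psComp (fun k => PowerSeries.coeff (R := ℝ) k EH) G) := by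
          refine Finset.sum_congr rfl fun p hp => ?_
          have hp2 : p.2 ≤ j := Finset.HasAntidiagonal.antidiagonal.snd_le hp
          rw [coeff_psComp, Finset.mul_sum]
          symm
          refine (Finset.sum_subset ?_ ?_).trans (Finset.sum_congr rfl fun k _ => by ring)
          · intro t ht
            rw [Finset.mem_range] at *
            omega
          · intro k _ hk
            simp only [Finset.mem_range, not_lt] at hk
            rw [coeff_pow_of_lt (constantCoeff_G hl) (by omega : p.2 < k), mul_zero, mul_zero]
  rw [key, hEH, FS_eq hl hm i, PowerSeries.coeff_X_pow]

end Spec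


lemma constantCoeff_degExp (l x : ℝ) : PowerSeries.constantCoeff (R := ℝ) (degExp l x) = 1 := by
  have : PowerSeries.coeff (R := ℝ) 0 (degExp l x) = 1 := by simp [degExp, coeff_mk, dfall_zero]
  rwa [PowerSeries.coeff_zero_eq_constantCoeff] at this

lemma dfallPoly_eval (l x : ℝ) (k : ℕ) : (dfallPoly l k).eval x = dfall l x k := by
  rw [dfallPoly, Polynomial.eval_prod, dfall]
  exact Finset.prod_congr rfl fun i _ => by simp

lemma dDowling_ext {l : ℝ} {m : ℕ} (x : ℝ) {k n : ℕ} (hk : k ≤ n) :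
    dDowling m l k x = ∑ i ∈ range (n+1), dW m l k i * dfall l x i := by
  rw [dDowling]
  refine Finset.sum_subset (by intro t ht; rw [Finset.mem_range] at *; omega) ?_
  intro i _ hi
  simp only [Finset.mem_range, not_lt] at hi
  have h0 : PowerSeries.constantCoeff (R := ℝ) (degExp l m - 1) = 0 := by
    rw [map_sub, constantCoeff_degExp]; simp
  have : PowerSeries.coeff (R := ℝ) k
      (degExp l 1 * ((degExp l ↑m - 1) * PowerSeries.C (R := ℝ) (1 / ↑m)) ^ i) = 0 := by
    rw [mul_pow, ← map_pow, ← mul_assoc, PowerSeries.coeff_mul_C,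
      coeff_mul_pow_of_lt h0 (by omega : k < i), zero_mul]
  rw [dW, this, mul_zero, zero_mul]

theorem stmt9 (l : ℝ) (hl : l ≠ 0) (m : ℕ) (hm : 0 < m) (n : ℕ) (p : Polynomial ℝ)
    (hp : p.natDegree ≤ n) (c : ℕ → ℝ)
    (hc : p = ∑ k ∈ range (n + 1), Polynomial.C (c k) * dfallPoly l k) (x : ℝ) :
    p.eval x =
      ∑ k ∈ range (n + 1),
        (1 / (k ! : ℝ) *
            ∑ j ∈ range (n + 1),
              (j ! : ℝ) *
                PowerSeries.coeff (R := ℝ) j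
                  ((PowerSeries.mk fun i => dfall 1 (-(1 / (m : ℝ))) i * (m : ℝ) ^ i / i !) *
                    (PowerSeries.C (R := ℝ) (1 / m) *
                        PowerSeries.mk fun i =>
                          (m : ℝ) ^ i * PowerSeries.coeff (R := ℝ) i (degLog (l / m))) ^ k) *
                c j) *
          dDowling m l k x := by
  have hmR : (m : ℝ) ≠ 0 := Nat.cast_ne_zero.mpr hm.ne'
  have hF : (PowerSeries.mk fun i => dfall 1 (-(1 / (m : ℝ))) i * (m : ℝ) ^ i / i !)
      = Bser (-(1 / (m : ℝ))) (m : ℝ) := by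
    ext j
    rw [coeff_mk, coeff_Bser]
  rw [hc, Polynomial.eval_finset_sum]
  have hLHS : ∀ k ∈ range (n+1), (Polynomial.C (c k) * dfallPoly l k).eval x
      = c k * dfall l x k := by
    intro k _
    rw [Polynomial.eval_mul, Polynomial.eval_C, dfallPoly_eval]
  rw [Finset.sum_congr rfl hLHS, hF, G_eq hl hm]
  symm
  set Fs : PowerSeries ℝ := Bser (-(1 / (m : ℝ))) (m : ℝ) with hFs
  set Gs : PowerSeries ℝ := (Bser (l / ↑m) ↑m - 1) * PowerSeries.C (R := ℝ) (1 / l) with hGs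
  calc ∑ k ∈ range (n + 1),
        (1 / (k ! : ℝ) * ∑ j ∈ range (n + 1),
            (j ! : ℝ) * PowerSeries.coeff (R := ℝ) j (Fs * Gs ^ k) * c j) * dDowling m l k x
      = ∑ k ∈ range (n + 1), ∑ i ∈ range (n + 1),
          (1 / (k ! : ℝ) * ∑ j ∈ range (n + 1),
            (j ! : ℝ) * PowerSeries.coeff (R := ℝ) j (Fs * Gs ^ k) * c j) *
            (dW m l k i * dfall l x i) := by
        refine Finset.sum_congr rfl fun k hk => ?_
        rw [dDowling_ext x (Nat.lt_succ_iff.mp (Finset.mem_range.mp hk)), Finset.mul_sum]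
    _ = ∑ i ∈ range (n + 1), ∑ k ∈ range (n + 1),
          (1 / (k ! : ℝ) * ∑ j ∈ range (n + 1),
            (j ! : ℝ) * PowerSeries.coeff (R := ℝ) j (Fs * Gs ^ k) * c j) *
            (dW m l k i * dfall l x i) := Finset.sum_comm
    _ = ∑ i ∈ range (n + 1), c i * dfall l x i := by
        refine Finset.sum_congr rfl fun i hi => ?_
        have hi' : i ≤ n := Nat.lt_succ_iff.mp (Finset.mem_range.mp hi)
        calc ∑ k ∈ range (n + 1),
              (1 / (k ! : ℝ) * ∑ j ∈ range (n + 1),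
                (j ! : ℝ) * PowerSeries.coeff (R := ℝ) j (Fs * Gs ^ k) * c j) *
                (dW m l k i * dfall l x i)
            = ∑ k ∈ range (n + 1), ∑ j ∈ range (n + 1),
                (j ! : ℝ) / (i ! : ℝ) * c j *
                  (PowerSeries.coeff (R := ℝ) j (Fs * Gs ^ k) *
                    PowerSeries.coeff (R := ℝ) k
                      (degExp l 1 * ((degExp l ↑m - 1) * PowerSeries.C (R := ℝ) (1 / ↑m)) ^ i)) *
                  dfall l x i := by
              refine Finset.sum_congr rfl fun k _ => ?_
              rw [dW, Finset.mul_sum, Finset.sum_mul]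
              refine Finset.sum_congr rfl fun j _ => ?_
              have hk : (k ! : ℝ) ≠ 0 := Nat.cast_ne_zero.mpr (Nat.factorial_ne_zero _)
              have hif : (i ! : ℝ) ≠ 0 := Nat.cast_ne_zero.mpr (Nat.factorial_ne_zero _)
              field_simp
          _ = ∑ j ∈ range (n + 1),
                (j ! : ℝ) / (i ! : ℝ) * c j *
                  (∑ k ∈ range (n + 1), PowerSeries.coeff (R := ℝ) j (Fs * Gs ^ k) *
                    PowerSeries.coeff (R := ℝ) k
                      (degExp l 1 * ((degExp l ↑m - 1) * PowerSeries.C (R := ℝ) (1 / ↑m)) ^ i)) *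
                  dfall l x i := by
              rw [Finset.sum_comm]
              refine Finset.sum_congr rfl fun j _ => ?_
              rw [Finset.mul_sum, Finset.sum_mul]
          _ = c i * dfall l x i := by
              have hstep : ∀ j ∈ range (n + 1),
                  (j ! : ℝ) / (i ! : ℝ) * c j *
                    (∑ k ∈ range (n + 1), PowerSeries.coeff (R := ℝ) j (Fs * Gs ^ k) *
                      PowerSeries.coeff (R := ℝ) k
                        (degExp l 1 * ((degExp l ↑m - 1) * PowerSeries.C (R := ℝ) (1 / ↑m)) ^ i)) *
                    dfall l x i
                  = (j ! : ℝ) / (i ! : ℝ) * c j * (if j = i then (1:ℝ) else 0) * dfall l x i := by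
                intro j hj
                rw [hFs, hGs, delta_id hl hm hi' (Nat.lt_succ_iff.mp (Finset.mem_range.mp hj))]
              rw [Finset.sum_congr rfl hstep]
              rw [Finset.sum_eq_single_of_mem i hi
                (fun j _ hji => by rw [if_neg hji, mul_zero, zero_mul])]
              rw [if_pos rfl, mul_one,
                div_self (Nat.cast_ne_zero.mpr (Nat.factorial_ne_zero i) : (i ! : ℝ) ≠ 0), one_mul]


end
end
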